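/- arXiv:1311.5068 — 10 statements merged into one kernel-verified Lean document; each statement's English description precedes it below -/
import Mathlib

section
/- Let (X,d_X) and (Y,d_Y) be finite metric spaces, let τ ⊆ X × Y be a correspondence, and let η ≥ 0 be such that |d_X(x,x') − d_Y(y,y')| ≤ η for all (x,y), (x',y') ∈ τ. Then |u_SL^X(x,x') − u_SL^Y(y,y')| ≤ η for all (x,y), (x',y') ∈ τ, where u_SL^X and u_SL^Y are the single-linkage ultrametrics of X and Y. -/
/-- A distance function `d` is a metric. -/
def IsMetric {X : Type*} (d : X → X → ℝ) : Prop :=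
  (∀ x y, d x y = d y x) ∧ (∀ x y, d x y = 0 ↔ x = y) ∧ (∀ x y z, d x z ≤ d x y + d y z)

/-- A distance function is an ultrametric: a metric satisfying the strong triangle
inequality. -/
def IsUltrametricD {X : Type*} (d : X → X → ℝ) : Prop :=
  IsMetric d ∧ ∀ x y z, d x z ≤ max (d x y) (d y z)

/-- The maximum of the consecutive distances along the chain `x :: l ++ [y]`. -/
def chainMax {X : Type*} (d : X → X → ℝ) : X → List X → X → ℝ
  | x, [], y => d x y
  | x, z :: l, y => max (d x z) (chainMax d z l y)

/-- The single-linkage ultrametric: the minimum over all chains from `x` to `y`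
of the maximum of the consecutive distances along the chain. -/
noncomputable def uSL {X : Type*} (d : X → X → ℝ) (x y : X) : ℝ :=
  sInf { r | ∃ l : List X, chainMax d x l y = r }

/-- A correspondence between `X` and `Y`: every point of `X` and every point of `Y`
occurs in some pair. -/
def IsCorr {X Y : Type*} (τ : Set (X × Y)) : Prop :=
  (∀ x, ∃ y, (x, y) ∈ τ) ∧ (∀ y, ∃ x, (x, y) ∈ τ)

/-- The distortion of a correspondence: the supremum of `|d_X(x,x') − d_Y(y,y')|`
over pairs `(x,y), (x',y')` in the correspondence. -/
noncomputable def corrDist {X Y : Type*} (dX : X → X → ℝ) (dY : Y → Y → ℝ)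
    (τ : Set (X × Y)) : ℝ :=
  sSup { v | ∃ p ∈ τ, ∃ q ∈ τ, v = |dX p.1 q.1 - dY p.2 q.2| }

/-- The Gromov–Hausdorff distance: half the infimum over correspondences of their
distortion. -/
noncomputable def ghDist {X Y : Type*} (dX : X → X → ℝ) (dY : Y → Y → ℝ) : ℝ :=
  (1 / 2) * sInf { r | ∃ τ : Set (X × Y), IsCorr τ ∧ corrDist dX dY τ = r }

/-- Single linkage value between two blocks: minimal cross distance. -/
noncomputable def ellSL {X : Type*} (d : X → X → ℝ) (A B : Finset X) : ℝ :=
  sInf { r | ∃ a ∈ A, ∃ b ∈ B, d a b = r }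

/-- Complete linkage value between two blocks: maximal cross distance. -/
noncomputable def ellCL {X : Type*} (d : X → X → ℝ) (A B : Finset X) : ℝ :=
  sSup { r | ∃ a ∈ A, ∃ b ∈ B, d a b = r }

/-- Average linkage value between two blocks: average cross distance. -/
noncomputable def ellAL {X : Type*} (d : X → X → ℝ) (A B : Finset X) : ℝ :=
  (∑ a ∈ A, ∑ b ∈ B, d a b) / (A.card * B.card)

lemma metric_nonneg {X : Type*} {d : X → X → ℝ} (hd : IsMetric d) (x y : X) : 0 ≤ d x y := by
  have h1 := hd.2.2 x y x
  rw [(hd.2.1 x x).2 rfl, hd.1 y x] at h1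
  linarith

lemma chainMax_nonneg {X : Type*} {d : X → X → ℝ} (hd : IsMetric d) :
    ∀ (l : List X) (x y : X), 0 ≤ chainMax d x l y := by
  intro l
  induction l with
  | nil => intro x y; exact metric_nonneg hd x y
  | cons z l ih => intro x y; exact le_trans (metric_nonneg hd x z) (le_max_left _ _)

lemma lift_chain {X Y : Type*} (dX : X → X → ℝ) (dY : Y → Y → ℝ) (R : X → Y → Prop) (η : ℝ)
    (h : ∀ x y, R x y → ∀ x' y', R x' y' → dY y y' ≤ dX x x' + η)
    (f : X → Y) (hf : ∀ z, R z (f z)) :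
    ∀ (l : List X) (x : X) (y : Y) (x' : X) (y' : Y), R x y → R x' y' →
      chainMax dY y (l.map f) y' ≤ chainMax dX x l x' + η := by
  intro l
  induction l with
  | nil => intro x y x' y' h1 h2; exact h x y h1 x' y' h2
  | cons z l ih =>
    intro x y x' y' h1 h2
    simp only [List.map_cons, chainMax]
    exact max_le ((h x y h1 z (f z) (hf z)).trans (add_le_add_left (le_max_left _ _) η))
      ((ih z (f z) x' y' (hf z) h2).trans (add_le_add_left (le_max_right _ _) η))

lemma uSL_le_uSL {X Y : Type*} {dX : X → X → ℝ} {dY : Y → Y → ℝ}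
    (hdY : IsMetric dY) (R : X → Y → Prop) (η : ℝ)
    (h : ∀ x y, R x y → ∀ x' y', R x' y' → dY y y' ≤ dX x x' + η)
    (f : X → Y) (hf : ∀ z, R z (f z))
    {x : X} {y : Y} {x' : X} {y' : Y} (h1 : R x y) (h2 : R x' y') :
    uSL dY y y' ≤ uSL dX x x' + η := by
  have key : uSL dY y y' - η ≤ uSL dX x x' := by
    have hne : dX x x' ∈ {r | ∃ l : List X, chainMax dX x l x' = r} := ⟨[], rfl⟩
    apply le_csInf ⟨_, hne⟩
    rintro r ⟨l, rfl⟩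
    have hle : uSL dY y y' ≤ chainMax dY y (l.map f) y' :=
      csInf_le ⟨0, by rintro s ⟨l', rfl⟩; exact chainMax_nonneg hdY _ _ _⟩ ⟨l.map f, rfl⟩
    linarith [lift_chain dX dY R η h f hf l x y x' y' h1 h2]
  linarith

/-- if a correspondence between two finite metric spaces has distortion
at most `η`, then it also has distortion at most `η` for the corresponding
single-linkage ultrametrics. -/
theorem stmt3 {X Y : Type*} [Fintype X] [Fintype Y]
    (dX : X → X → ℝ) (dY : Y → Y → ℝ) (hdX : IsMetric dX) (hdY : IsMetric dY)
    (τ : Set (X × Y)) (hτ : IsCorr τ) (η : ℝ) (hη : 0 ≤ η)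
    (h : ∀ p ∈ τ, ∀ q ∈ τ, |dX p.1 q.1 - dY p.2 q.2| ≤ η) :
    ∀ p ∈ τ, ∀ q ∈ τ, |uSL dX p.1 q.1 - uSL dY p.2 q.2| ≤ η := by
  intro p hp q hq
  rw [abs_sub_le_iff]
  constructor
  · have := uSL_le_uSL (dX := dY) (dY := dX) hdX (fun y x => (x, y) ∈ τ) η
      (fun y x hxy y' x' hxy' => by
        have := h (x, y) hxy (x', y') hxy'
        rw [abs_sub_le_iff] at this
        linarith [this.1])
      (fun y => (hτ.2 y).choose) (fun y => (hτ.2 y).choose_spec) hp hq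
    linarith
  · have := uSL_le_uSL (dX := dX) (dY := dY) hdY (fun x y => (x, y) ∈ τ) η
      (fun x y hxy x' y' hxy' => by
        have := h (x, y) hxy (x', y') hxy'
        rw [abs_sub_le_iff] at this
        linarith [this.2])
      (fun x => (hτ.1 x).choose) (fun x => (hτ.1 x).choose_spec) hp hq
    linarith
end

section
/- Let (X,d) be a finite metric space, let (U,u) be an ultrametric space, let ε > 0, and suppose there exists a correspondence τ ⊆ X × U such that |d(x,x') − u(y,y')| < ε for all (x,y), (x',y') ∈ τ (this holds in particular whenever d_GH((X,d),(U,u)) < ε/2). Then the set of distance values {u(y,y') : y, y' ∈ U, u(y,y') > ε} is finite. -/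
private lemma ultra_key {U : Type*} {u : U → U → ℝ} (hu : IsUltrametricD u)
    {y y' z z' : U} {ε : ℝ} (hyz : u y z < ε) (hy'z' : u y' z' < ε)
    (hv : ε < u y y') : u z z' ≤ u y y' := by
  have h1 : u z z' ≤ max (u z y) (u y z') := hu.2 z y z'
  have h2 : u y z' ≤ max (u y y') (u y' z') := hu.2 y y' z'
  have hsy : u z y = u y z := hu.1.1 z y
  have : u z z' ≤ max (u z y) (max (u y y') (u y' z')) :=
    h1.trans (max_le_max le_rfl h2)
  calc u z z' ≤ max (u z y) (max (u y y') (u y' z')) := this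
    _ ≤ u y y' := by
        apply max_le
        · rw [hsy]; linarith
        · exact max_le le_rfl (by linarith)

/-- if a finite metric space `(X,d)` admits a correspondence with an
ultrametric space `(U,u)` of distortion `< ε`, then `u` takes only finitely many
values above `ε`. -/
theorem stmt6 {X U : Type*} [Fintype X] (d : X → X → ℝ) (hd : IsMetric d)
    (u : U → U → ℝ) (hu : IsUltrametricD u) (ε : ℝ) (hε : 0 < ε)
    (τ : Set (X × U)) (hτ : IsCorr τ)
    (h : ∀ p ∈ τ, ∀ q ∈ τ, |d p.1 q.1 - u p.2 q.2| < ε) :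
    { v : ℝ | ∃ y y' : U, u y y' = v ∧ ε < v }.Finite := by
  classical
  rw [Set.finite_coe_iff.symm]
  haveI : Finite (X × X) := Finite.instProd
  -- choose witnesses
  set S := { v : ℝ | ∃ y y' : U, u y y' = v ∧ ε < v } with hS
  have sel : ∀ v : S, ∃ p : (X × U) × (X × U),
      p.1 ∈ τ ∧ p.2 ∈ τ ∧ u p.1.2 p.2.2 = (v : ℝ) := by
    rintro ⟨v, y, y', huv, hεv⟩
    obtain ⟨x, hx⟩ := hτ.2 y
    obtain ⟨x', hx'⟩ := hτ.2 y'
    exact ⟨((x, y), (x', y')), hx, hx', huv⟩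
  choose p hp1 hp2 hp3 using sel
  have small : ∀ {a b : X × U}, a ∈ τ → b ∈ τ → a.1 = b.1 → u a.2 b.2 < ε := by
    intro a b ha hb hab
    have := h a ha b hb
    have hdx : d a.1 b.1 = 0 := (hd.2.1 a.1 b.1).2 hab
    simp only [hdx, zero_sub, abs_neg] at this
    exact (le_abs_self _).trans_lt this
  have inj : Function.Injective (fun v : S => ((p v).1.1, (p v).2.1)) := by
    intro v w hvw
    simp only [Prod.mk.injEq] at hvw
    have hεv : ε < (v : ℝ) := v.2.choose_spec.choose_spec.2
    have hεw : ε < (w : ℝ) := w.2.choose_spec.choose_spec.2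
    have h1 : u (p v).1.2 (p w).1.2 < ε := small (hp1 v) (hp1 w) hvw.1
    have h2 : u (p v).2.2 (p w).2.2 < ε := small (hp2 v) (hp2 w) hvw.2
    have le1 : u (p w).1.2 (p w).2.2 ≤ u (p v).1.2 (p v).2.2 :=
      ultra_key hu h1 h2 (by rw [hp3 v]; exact hεv)
    have le2 : u (p v).1.2 (p v).2.2 ≤ u (p w).1.2 (p w).2.2 :=
      ultra_key hu (by rw [hu.1.1]; exact h1) (by rw [hu.1.1]; exact h2)
        (by rw [hp3 w]; exact hεw)
    have : (v : ℝ) = (w : ℝ) := by rw [← hp3 v, ← hp3 w]; exact le_antisymm le2 le1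
    exact Subtype.ext this
  exact Finite.of_injective _ inj
end

section
/- Let (X,d_0) be a finite metric space, let B ⊆ X be such that B and X∖B are both nonempty, let R > 0, and let d_t (t ∈ [0,1)) be the interpolated distances. Then for all s_1, s_2 ∈ [0,1), d_GH((X,d_{s_1}),(X,d_{s_2})) ≤ (1/2)·|s_2 − s_1|·(diam(X,d_0) + R). -/
/-- Diameter of a distance function: the supremum of its values. -/
noncomputable def metricDiam {X : Type*} (d : X → X → ℝ) : ℝ :=
  sSup { r | ∃ x y, d x y = r }

open Classical in
/-- The interpolated distance `d_t` of the path `Γ^{B,Bᶜ}_R`: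
`d_t(x,y) = (1−t)d₀(x,y)` if `x,y` lie in the same block (`B` or `Bᶜ`), and
`d_t(x,y) = (1−t)d₀(x,y) + tR` otherwise. -/
noncomputable def dInterp {X : Type*} (d0 : X → X → ℝ) (B : Set X) (R t : ℝ)
    (x y : X) : ℝ :=
  if x ∈ B ↔ y ∈ B then (1 - t) * d0 x y else (1 - t) * d0 x y + t * R

/-- along the interpolation `Γ^{B,Bᶜ}_R`, the Gromov–Hausdorff distance
between `(X,d_{s₁})` and `(X,d_{s₂})` is at most `½|s₂−s₁|(diam(X,d₀)+R)`. -/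
theorem stmt8 {X : Type*} [Fintype X] [Nonempty X] (d0 : X → X → ℝ) (hd0 : IsMetric d0)
    (B : Set X) (hB : B.Nonempty) (hBc : Bᶜ.Nonempty) (R : ℝ) (hR : 0 < R)
    (s1 s2 : ℝ) (hs1 : s1 ∈ Set.Ico (0 : ℝ) 1) (hs2 : s2 ∈ Set.Ico (0 : ℝ) 1) :
    ghDist (dInterp d0 B R s1) (dInterp d0 B R s2) ≤
      (1 / 2) * |s2 - s1| * (metricDiam d0 + R) := by
  obtain ⟨hsymm, hzero, htri⟩ := hd0
  have hnn : ∀ x y, 0 ≤ d0 x y := by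
    intro x y
    have h := htri x y x
    rw [(hzero x x).mpr rfl, hsymm y x] at h
    linarith
  have hSeq : { r | ∃ x y, d0 x y = r } = Set.range (fun p : X × X => d0 p.1 p.2) := by
    ext r; constructor
    · rintro ⟨x, y, rfl⟩; exact ⟨(x, y), rfl⟩
    · rintro ⟨⟨x, y⟩, rfl⟩; exact ⟨x, y, rfl⟩
  have hbdd : BddAbove { r | ∃ x y, d0 x y = r } := by
    rw [hSeq]; exact (Set.finite_range _).bddAbove
  have hdiam : ∀ x y, d0 x y ≤ metricDiam d0 :=
    fun x y => le_csSup hbdd ⟨x, y, rfl⟩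
  have hdiam0 : 0 ≤ metricDiam d0 :=
    le_trans (hnn (Classical.arbitrary X) (Classical.arbitrary X)) (hdiam _ _)
  set C := |s2 - s1| * (metricDiam d0 + R) with hC
  have hC0 : 0 ≤ C := mul_nonneg (abs_nonneg _) (by linarith)
  have hpair : ∀ x y, |dInterp d0 B R s1 x y - dInterp d0 B R s2 x y| ≤ C := by
    intro x y
    unfold dInterp
    by_cases h : x ∈ B ↔ y ∈ B
    · simp only [if_pos h]
      have he : (1 - s1) * d0 x y - (1 - s2) * d0 x y = (s2 - s1) * d0 x y := by ring
      rw [he, abs_mul, abs_of_nonneg (hnn x y)]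
      have h1 := hdiam x y
      have h2 := abs_nonneg (s2 - s1)
      nlinarith
    · simp only [if_neg h]
      have he : (1 - s1) * d0 x y + s1 * R - ((1 - s2) * d0 x y + s2 * R)
          = (s2 - s1) * (d0 x y - R) := by ring
      rw [he, abs_mul]
      have h1 : |d0 x y - R| ≤ metricDiam d0 + R := by
        have h2 := hnn x y; have h3 := hdiam x y
        rw [abs_le]; constructor <;> linarith
      have h2 := abs_nonneg (s2 - s1)
      nlinarith
  set τ : Set (X × X) := { p | p.1 = p.2 } with hτ
  have hcorr : IsCorr τ := ⟨fun x => ⟨x, rfl⟩, fun y => ⟨y, rfl⟩⟩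
  have hcd : corrDist (dInterp d0 B R s1) (dInterp d0 B R s2) τ ≤ C := by
    apply csSup_le
    · refine ⟨_, ⟨(Classical.arbitrary X, Classical.arbitrary X), rfl,
        (Classical.arbitrary X, Classical.arbitrary X), rfl, rfl⟩⟩
    · rintro v ⟨p, hp, q, hq, rfl⟩
      have hp' : p.1 = p.2 := hp
      have hq' : q.1 = q.2 := hq
      rw [← hp', ← hq']
      exact hpair p.1 q.1
  have hmem : corrDist (dInterp d0 B R s1) (dInterp d0 B R s2) τ ∈
      { r | ∃ τ' : Set (X × X), IsCorr τ' ∧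
        corrDist (dInterp d0 B R s1) (dInterp d0 B R s2) τ' = r } := ⟨τ, hcorr, rfl⟩
  have hbelow : ∀ r ∈ { r | ∃ τ' : Set (X × X), IsCorr τ' ∧
      corrDist (dInterp d0 B R s1) (dInterp d0 B R s2) τ' = r }, (0:ℝ) ≤ r := by
    rintro r ⟨τ', hτ', rfl⟩
    unfold corrDist
    by_cases hb : BddAbove {v | ∃ p ∈ τ', ∃ q ∈ τ',
        v = |dInterp d0 B R s1 p.1 q.1 - dInterp d0 B R s2 p.2 q.2|}
    · obtain ⟨y0, hy0⟩ := hτ'.1 (Classical.arbitrary X)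
      calc (0:ℝ) ≤ |dInterp d0 B R s1 (Classical.arbitrary X) (Classical.arbitrary X)
            - dInterp d0 B R s2 y0 y0| := abs_nonneg _
        _ ≤ _ := le_csSup hb ⟨(Classical.arbitrary X, y0), hy0,
            (Classical.arbitrary X, y0), hy0, rfl⟩
    · rw [Real.sSup_of_not_bddAbove hb]
  have hinf : sInf { r | ∃ τ' : Set (X × X), IsCorr τ' ∧
      corrDist (dInterp d0 B R s1) (dInterp d0 B R s2) τ' = r } ≤ C :=
    le_trans (csInf_le ⟨0, fun r hr => hbelow r hr⟩ hmem) hcd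
  unfold ghDist
  calc (1/2) * sInf { r | ∃ τ' : Set (X × X), IsCorr τ' ∧
        corrDist (dInterp d0 B R s1) (dInterp d0 B R s2) τ' = r }
      ≤ (1/2) * C := by linarith
    _ = (1 / 2) * |s2 - s1| * (metricDiam d0 + R) := by rw [hC]; ring
end

section
/- Let (X,d_0) be a finite metric space, let B ⊆ X be such that B and X∖B are both nonempty, let R > 0, and let d_t (t ∈ [0,1)) be the interpolated distances. Let I(R) denote the two-point metric space with distance R between its points. Then for every t ∈ [0,1), d_GH((X,d_t), I(R)) ≤ (1/2)·(1−t)·(diam(X,d_0) + R). Consequently the path Γ: [0,1] → (finite metric spaces, d_GH) with Γ(t) = (X,d_t) for t < 1 and Γ(1) = I(R) is continuous. -/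
theorem my_ghDist_le {X Y : Type*} (dX : X → X → ℝ) (dY : Y → Y → ℝ) (M : ℝ) (hM : 0 ≤ M)
    (τ : Set (X × Y)) (hτ : IsCorr τ)
    (hb : ∀ p ∈ τ, ∀ q ∈ τ, |dX p.1 q.1 - dY p.2 q.2| ≤ M) :
    ghDist dX dY ≤ (1 / 2) * M := by
  have hcd : corrDist dX dY τ ≤ M := by
    apply Real.sSup_le _ hM
    rintro v ⟨p, hp, q, hq, rfl⟩
    exact hb p hp q hq
  have hlb : ∀ r ∈ { r | ∃ τ' : Set (X × Y), IsCorr τ' ∧ corrDist dX dY τ' = r }, (0:ℝ) ≤ r := by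
    rintro r ⟨τ', _, rfl⟩
    apply Real.sSup_nonneg
    rintro v ⟨p, hp, q, hq, rfl⟩
    exact abs_nonneg _
  have hle : sInf { r | ∃ τ' : Set (X × Y), IsCorr τ' ∧ corrDist dX dY τ' = r } ≤
      corrDist dX dY τ := csInf_le ⟨0, hlb⟩ ⟨τ, hτ, rfl⟩
  unfold ghDist
  linarith

/-- along the interpolation `Γ^{B,Bᶜ}_R`, the Gromov–Hausdorff distance
between `(X,d_t)` and the two-point space `I(R)` is at most `½(1−t)(diam(X,d₀)+R)`;
consequently, the path `Γ` (given by `Γ(t) = (X,d_t)` for `t < 1` and `Γ(1) = I(R)`)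
is continuous into the finite metric spaces with the Gromov–Hausdorff metric, here
expressed via any function `g` recording the pairwise Gromov–Hausdorff distances of
the points of the path. -/
theorem stmt9 {X : Type*} [Fintype X] [Nonempty X] (d0 : X → X → ℝ) (hd0 : IsMetric d0)
    (B : Set X) (hB : B.Nonempty) (hBc : Bᶜ.Nonempty) (R : ℝ) (hR : 0 < R)
    (dTwo : Fin 2 → Fin 2 → ℝ) (hdTwo : ∀ i j, dTwo i j = if i = j then 0 else R) :
    (∀ t, 0 ≤ t → t < 1 →
      ghDist (dInterp d0 B R t) dTwo ≤ (1 / 2) * (1 - t) * (metricDiam d0 + R)) ∧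
    (∀ g : ℝ → ℝ → ℝ,
      (∀ s ∈ Set.Ico (0 : ℝ) 1, ∀ s' ∈ Set.Ico (0 : ℝ) 1,
        g s s' = ghDist (dInterp d0 B R s) (dInterp d0 B R s')) →
      (∀ s ∈ Set.Ico (0 : ℝ) 1,
        g s 1 = ghDist (dInterp d0 B R s) dTwo ∧ g 1 s = ghDist (dInterp d0 B R s) dTwo) →
      g 1 1 = 0 →
      ∀ s ∈ Set.Icc (0 : ℝ) 1, ∀ ε > 0, ∃ δ > 0,
        ∀ s' ∈ Set.Icc (0 : ℝ) 1, |s' - s| < δ → g s s' < ε) := by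
  -- basic facts about d0 and its diameter
  have hd0nn : ∀ x y, 0 ≤ d0 x y := by
    intro x y
    have h1 := hd0.2.2 x y x
    have h2 := hd0.1 x y
    have h3 := (hd0.2.1 x x).mpr rfl
    linarith
  have hSet : {r | ∃ x y, d0 x y = r} = Set.range (fun p : X × X => d0 p.1 p.2) := by
    ext r
    constructor
    · rintro ⟨x, y, rfl⟩; exact ⟨(x, y), rfl⟩
    · rintro ⟨⟨x, y⟩, rfl⟩; exact ⟨x, y, rfl⟩
  have hbdd : BddAbove {r | ∃ x y, d0 x y = r} := by
    rw [hSet]; exact (Set.finite_range _).bddAbove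
  have hdle : ∀ x y, d0 x y ≤ metricDiam d0 := fun x y => le_csSup hbdd ⟨x, y, rfl⟩
  have hdiamnn : 0 ≤ metricDiam d0 := by
    obtain ⟨x⟩ := (inferInstance : Nonempty X)
    calc (0:ℝ) = d0 x x := ((hd0.2.1 x x).mpr rfl).symm
    _ ≤ _ := hdle x x
  -- Part 1: bound on ghDist to the two-point space
  have hbound : ∀ t, 0 ≤ t → t < 1 →
      ghDist (dInterp d0 B R t) dTwo ≤ (1 / 2) * (1 - t) * (metricDiam d0 + R) := by
    intro t ht ht1
    have h1t : (0:ℝ) ≤ 1 - t := by linarith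
    have hM : (0:ℝ) ≤ (1 - t) * (metricDiam d0 + R) := by
      apply mul_nonneg h1t; linarith
    have := my_ghDist_le (dInterp d0 B R t) dTwo ((1 - t) * (metricDiam d0 + R)) hM
      {p : X × Fin 2 | (p.1 ∈ B ∧ p.2 = 0) ∨ (p.1 ∉ B ∧ p.2 = 1)}
      (by
        constructor
        · intro x
          by_cases hx : x ∈ B
          · exact ⟨0, Or.inl ⟨hx, rfl⟩⟩
          · exact ⟨1, Or.inr ⟨hx, rfl⟩⟩
        · intro i
          fin_cases i
          · obtain ⟨b, hb⟩ := hB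
            exact ⟨b, Or.inl ⟨hb, rfl⟩⟩
          · obtain ⟨c, hc⟩ := hBc
            exact ⟨c, Or.inr ⟨hc, rfl⟩⟩)
      (by
        rintro p hp q hq
        have hRd : d0 p.1 q.1 ≤ metricDiam d0 := hdle p.1 q.1
        have hnn : 0 ≤ d0 p.1 q.1 := hd0nn p.1 q.1
        have hmul1 : (1 - t) * d0 p.1 q.1 ≤ (1 - t) * metricDiam d0 :=
          mul_le_mul_of_nonneg_left hRd h1t
        have hmul2 : 0 ≤ (1 - t) * d0 p.1 q.1 := mul_nonneg h1t hnn
        have hmul3 : 0 ≤ (1 - t) * metricDiam d0 := mul_nonneg h1t hdiamnn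
        have hmul4 : 0 ≤ (1 - t) * R := mul_nonneg h1t hR.le
        have htR : 0 ≤ t * R := mul_nonneg ht hR.le
        rcases hp with ⟨hp1, hp2⟩ | ⟨hp1, hp2⟩ <;> rcases hq with ⟨hq1, hq2⟩ | ⟨hq1, hq2⟩
        · -- both in B
          rw [hdTwo, hp2, hq2, if_pos rfl]
          simp only [dInterp, if_pos (iff_of_true hp1 hq1)]
          rw [abs_le]
          constructor <;> nlinarith
        · -- p in B, q not
          rw [hdTwo, hp2, hq2, if_neg (by decide)]
          simp only [dInterp, if_neg (fun h : p.1 ∈ B ↔ q.1 ∈ B => hq1 (h.mp hp1))]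
          rw [abs_le]
          constructor <;> nlinarith
        · -- p not in B, q in B
          rw [hdTwo, hp2, hq2, if_neg (by decide)]
          simp only [dInterp, if_neg (fun h : p.1 ∈ B ↔ q.1 ∈ B => hp1 (h.mpr hq1))]
          rw [abs_le]
          constructor <;> nlinarith
        · -- both outside B
          rw [hdTwo, hp2, hq2, if_pos rfl]
          simp only [dInterp, if_pos (iff_of_false hp1 hq1)]
          rw [abs_le]
          constructor <;> nlinarith)
    calc ghDist (dInterp d0 B R t) dTwo ≤ (1 / 2) * ((1 - t) * (metricDiam d0 + R)) := this
    _ = (1 / 2) * (1 - t) * (metricDiam d0 + R) := by ring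
  refine ⟨hbound, ?_⟩
  -- Part 2: continuity
  -- uniform Lipschitz-type bound between two interpolated spaces
  have hpair : ∀ s s' : ℝ,
      ghDist (dInterp d0 B R s) (dInterp d0 B R s') ≤
        (1 / 2) * (|s - s'| * (metricDiam d0 + R)) := by
    intro s s'
    have habs : (0:ℝ) ≤ |s - s'| := abs_nonneg _
    have hM : (0:ℝ) ≤ |s - s'| * (metricDiam d0 + R) := by
      apply mul_nonneg habs; linarith
    apply my_ghDist_le _ _ _ hM {p : X × X | p.1 = p.2}
      ⟨fun x => ⟨x, rfl⟩, fun y => ⟨y, rfl⟩⟩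
    rintro p hp q hq
    have hp' : p.1 = p.2 := hp
    have hq' : q.1 = q.2 := hq
    rw [← hp', ← hq']
    have h1 : s' - s ≤ |s - s'| := by rw [abs_sub_comm]; exact le_abs_self _
    have h2 : s - s' ≤ |s - s'| := le_abs_self _
    have hnn : 0 ≤ d0 p.1 q.1 := hd0nn p.1 q.1
    have hRd : d0 p.1 q.1 ≤ metricDiam d0 := hdle p.1 q.1
    have hm1 : (s' - s) * d0 p.1 q.1 ≤ |s - s'| * d0 p.1 q.1 :=
      mul_le_mul_of_nonneg_right h1 hnn
    have hm2 : (s - s') * d0 p.1 q.1 ≤ |s - s'| * d0 p.1 q.1 :=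
      mul_le_mul_of_nonneg_right h2 hnn
    have hm3 : |s - s'| * d0 p.1 q.1 ≤ |s - s'| * metricDiam d0 :=
      mul_le_mul_of_nonneg_left hRd habs
    have hm4 : (s - s') * R ≤ |s - s'| * R := mul_le_mul_of_nonneg_right h2 hR.le
    have hm5 : (s' - s) * R ≤ |s - s'| * R := mul_le_mul_of_nonneg_right h1 hR.le
    have hm6 : 0 ≤ |s - s'| * R := mul_nonneg habs hR.le
    by_cases h : p.1 ∈ B ↔ q.1 ∈ B
    · simp only [dInterp, if_pos h]
      rw [abs_le]
      constructor <;> nlinarith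
    · simp only [dInterp, if_neg h]
      rw [abs_le]
      constructor <;> nlinarith
  intro g hgl hgone hg11 s hs ε hε
  set C : ℝ := (1 / 2) * (metricDiam d0 + R) with hC
  have hCpos : 0 < C := by rw [hC]; positivity
  refine ⟨ε / C, div_pos hε hCpos, ?_⟩
  intro s' hs' hlt
  have key : g s s' ≤ C * |s' - s| := by
    by_cases hs1 : s = 1
    · by_cases hs'1 : s' = 1
      · subst hs1; subst hs'1
        rw [hg11]
        positivity
      · subst hs1
        have hmem : s' ∈ Set.Ico (0:ℝ) 1 := ⟨hs'.1, lt_of_le_of_ne hs'.2 hs'1⟩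
        rw [(hgone s' hmem).2]
        have := hbound s' hmem.1 hmem.2
        have habs : |s' - (1:ℝ)| = 1 - s' := by
          rw [abs_of_nonpos (by linarith [hmem.2.le])]; ring
        rw [habs]
        calc ghDist (dInterp d0 B R s') dTwo ≤ (1 / 2) * (1 - s') * (metricDiam d0 + R) :=
          this
        _ = C * (1 - s') := by rw [hC]; ring
    · have hmem : s ∈ Set.Ico (0:ℝ) 1 := ⟨hs.1, lt_of_le_of_ne hs.2 hs1⟩
      by_cases hs'1 : s' = 1
      · subst hs'1
        rw [(hgone s hmem).1]
        have := hbound s hmem.1 hmem.2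
        have habs : |(1:ℝ) - s| = 1 - s := by
          rw [abs_of_nonneg (by linarith [hmem.2.le])]
        rw [habs]
        calc ghDist (dInterp d0 B R s) dTwo ≤ (1 / 2) * (1 - s) * (metricDiam d0 + R) :=
          this
        _ = C * (1 - s) := by rw [hC]; ring
      · have hmem' : s' ∈ Set.Ico (0:ℝ) 1 := ⟨hs'.1, lt_of_le_of_ne hs'.2 hs'1⟩
        rw [hgl s hmem s' hmem']
        calc ghDist (dInterp d0 B R s) (dInterp d0 B R s') ≤
            (1 / 2) * (|s - s'| * (metricDiam d0 + R)) := hpair s s'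
        _ = C * |s' - s| := by rw [hC, abs_sub_comm]; ring
  calc g s s' ≤ C * |s' - s| := key
  _ < C * (ε / C) := by exact mul_lt_mul_of_pos_left hlt hCpos
  _ = ε := by field_simp
end

section
/- Let (X,d) be a finite metric space partitioned into nonempty disjoint subsets B_1 and B_2, let b_1 ∈ B_1 and b_2 ∈ B_2 with R := d(b_1,b_2) > 0, and let δ ≥ 0. For t ∈ [0,1), define d_t on X by: d_t(x,y) = (1−t)d(x,y) if x,y ∈ B_1∖{b_1} or x,y ∈ B_2∖{b_2}; d_t(x,y) = (1−t)d(x,y) + tδ if one of x,y equals b_i and the other lies in B_i∖{b_i} (i = 1,2); d_t(b_1,b_2) = R; d_t(x,y) = (1−t)d(x,y) + t(R+δ) if exactly one of x,y lies in {b_1,b_2} and the other lies in the opposite block minus its bridge point; and d_t(x,y) = (1−t)d(x,y) + t(R+2δ) if x ∈ B_1∖{b_1} and y ∈ B_2∖{b_2} or vice versa. Then d_t is a metric on X for every t ∈ [0,1). -/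
open Classical in
/-- The bridged interpolated distance `d_t` for a partition `B₁, B₁ᶜ` with bridge
points `b₁ ∈ B₁`, `b₂ ∈ B₁ᶜ` at scale `R = d(b₁,b₂)` and gap `δ`:
within a block minus its bridge point distances shrink by `(1−t)`; distances to the
own bridge point get `+tδ`; `d_t(b₁,b₂) = R`; cross distances involving exactly one
bridge point get `+t(R+δ)`; the remaining cross distances get `+t(R+2δ)`. -/
noncomputable def dBridge {X : Type*} (d : X → X → ℝ) (B1 : Set X) (b1 b2 : X)
    (R δ t : ℝ) (x y : X) : ℝ :=
  if x = y then 0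
  else if (x = b1 ∧ y = b2) ∨ (x = b2 ∧ y = b1) then R
  else if (x ∈ B1 ∧ y ∈ B1) ∨ (x ∉ B1 ∧ y ∉ B1) then
    if x = b1 ∨ y = b1 ∨ x = b2 ∨ y = b2 then (1 - t) * d x y + t * δ
    else (1 - t) * d x y
  else
    if x = b1 ∨ y = b1 ∨ x = b2 ∨ y = b2 then (1 - t) * d x y + t * (R + δ)
    else (1 - t) * d x y + t * (R + 2 * δ)

open Classical in
/-- Height function used to represent the bridged distance. -/
noncomputable def hAux {X : Type*} (B1 : Set X) (b1 b2 : X) (R δ : ℝ) (x : X) : ℝ :=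
  if x = b1 then δ else if x = b2 then δ + R else if x ∈ B1 then 0 else 2*δ + R

set_option maxRecDepth 8000

/-- the bridged interpolated distance `d_t` is a metric for every
`t ∈ [0,1)`. -/
theorem stmt13 {X : Type*} [Fintype X] (d : X → X → ℝ) (hd : IsMetric d)
    (B1 : Set X) (hB1 : B1.Nonempty) (hB2 : B1ᶜ.Nonempty)
    (b1 b2 : X) (hb1 : b1 ∈ B1) (hb2 : b2 ∈ B1ᶜ)
    (R : ℝ) (hR : d b1 b2 = R) (hRpos : 0 < R) (δ : ℝ) (hδ : 0 ≤ δ)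
    (t : ℝ) (ht0 : 0 ≤ t) (ht1 : t < 1) :
    IsMetric (dBridge d B1 b1 b2 R δ t) := by
  obtain ⟨hsymm, hzero, htri⟩ := hd
  have hdnn : ∀ x y, 0 ≤ d x y := by
    intro x y
    have h1 := htri x y x
    have h2 := (hzero x x).2 rfl
    have h3 := hsymm x y
    linarith
  classical
  have hb2' : b2 ∉ B1 := hb2
  let h : X → ℝ := hAux B1 b1 b2 R δ
  have hne : b1 ≠ b2 := fun e => hb2' (e ▸ hb1)
  have hv1 : h b1 = δ := by simp [h, hAux]
  have hv2 : h b2 = δ + R := by simp [h, hAux, Ne.symm hne]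
  have hvB : ∀ z, ¬z = b1 → ¬z = b2 → z ∈ B1 → h z = 0 := by
    intro z h1 h2 h3; simp [h, hAux, h1, h2, h3]
  have hvC : ∀ z, ¬z = b1 → ¬z = b2 → z ∉ B1 → h z = 2*δ + R := by
    intro z h1 h2 h3; simp [h, hAux, h1, h2, h3]
  have hA1 : |δ - (δ + R)| = R := by rw [abs_of_nonpos (by linarith)]; ring
  have hA2 : |δ + R - δ| = R := by rw [abs_of_nonneg (by linarith)]; ring
  have hA3 : |δ - 0| = δ := by rw [abs_of_nonneg (by linarith)]; ring
  have hA4 : |(0:ℝ) - δ| = δ := by rw [abs_of_nonpos (by linarith)]; ring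
  have hA5 : |δ - (2*δ + R)| = δ + R := by rw [abs_of_nonpos (by linarith)]; ring
  have hA6 : |2*δ + R - δ| = δ + R := by rw [abs_of_nonneg (by linarith)]; ring
  have hA7 : |δ + R - 0| = δ + R := by rw [abs_of_nonneg (by linarith)]; ring
  have hA8 : |(0:ℝ) - (δ + R)| = δ + R := by rw [abs_of_nonpos (by linarith)]; ring
  have hA9 : |δ + R - (2*δ + R)| = δ := by rw [abs_of_nonpos (by linarith)]; ring
  have hA10 : |2*δ + R - (δ + R)| = δ := by rw [abs_of_nonneg (by linarith)]; ring
  have hA11 : |(0:ℝ) - (2*δ + R)| = 2*δ + R := by rw [abs_of_nonpos (by linarith)]; ring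
  have hA12 : |2*δ + R - 0| = 2*δ + R := by rw [abs_of_nonneg (by linarith)]; ring
  have key : ∀ x y, dBridge d B1 b1 b2 R δ t x y = (1-t)*d x y + t*|h x - h y| := by
    intro x y
    by_cases hxy : x = y
    · subst hxy; simp [dBridge, (hzero x x).2 rfl]
    · by_cases hc1 : x = b1 ∧ y = b2
      · obtain ⟨e1, e2⟩ := hc1
        rw [e1, e2]
        simp only [dBridge]
        rw [if_neg hne, if_pos (by tauto : _), hv1, hv2, hA1, hR]; ring
      · by_cases hc2 : x = b2 ∧ y = b1
        · obtain ⟨e1, e2⟩ := hc2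
          rw [e1, e2]
          simp only [dBridge]
          rw [if_neg (Ne.symm hne), if_pos (by tauto : _), hv1, hv2, hA2,
            hsymm b2 b1, hR]; ring
        · simp only [dBridge, if_neg hxy,
            if_neg (show ¬((x = b1 ∧ y = b2) ∨ (x = b2 ∧ y = b1)) by tauto)]
          by_cases hx1 : x = b1 <;> by_cases hx2 : x = b2 <;>
        by_cases hy1 : y = b1 <;> by_cases hy2 : y = b2 <;>
        by_cases hxB : x ∈ B1 <;> by_cases hyB : y ∈ B1 <;>
        simp_all only [hv1, hv2, hvB, hvC, sub_self, abs_zero, not_true, not_false_iff,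
          and_true, true_and, and_false, false_and, or_true, true_or, or_false, false_or,
          if_true, if_false, and_self, or_self, ite_true, ite_false,
          hA1, hA2, hA3, hA4, hA5, hA6, hA7, hA8, hA9, hA10, hA11, hA12] <;>
        first
          | rfl
          | ring
          | (exfalso; tauto)
          | (split_ifs <;> first | ring | tauto)
  refine ⟨?_, ?_, ?_⟩
  · intro x y
    rw [key, key, hsymm, abs_sub_comm]
  · intro x y
    rw [key]
    constructor
    · intro h0
      have h1 : 0 ≤ (1-t) * d x y := mul_nonneg (by linarith) (hdnn x y)
      have h2 : 0 ≤ t * |h x - h y| := mul_nonneg ht0 (abs_nonneg _)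
      have h3 : (1-t) * d x y = 0 := by linarith
      have h4 : d x y = 0 := by
        rcases mul_eq_zero.1 h3 with h5 | h5
        · linarith
        · exact h5
      exact (hzero x y).1 h4
    · intro e; subst e; simp [(hzero x x).2 rfl]
  · intro x y z
    rw [key, key, key]
    have h1 := htri x y z
    have h2 : |h x - h z| ≤ |h x - h y| + |h y - h z| := abs_sub_le _ _ _
    have h3 : (1-t) * d x z ≤ (1-t) * (d x y + d y z) :=
      mul_le_mul_of_nonneg_left h1 (by linarith)
    have h4 : t * |h x - h z| ≤ t * (|h x - h y| + |h y - h z|) :=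
      mul_le_mul_of_nonneg_left h2 ht0
    nlinarith
end

section
/- Let (X,d) be a finite metric space partitioned into nonempty disjoint subsets B_1 and B_2, let b_1 ∈ B_1 and b_2 ∈ B_2 with R := d(b_1,b_2) > 0, let δ ≥ 0, and assume additionally that d(x,y) ≥ R + δ for every pair (x,y) ∈ B_1 × B_2 with (x,y) ≠ (b_1,b_2). Let d_t (t ∈ [0,1)) be the bridged interpolated distance. Then for every t ∈ [0,1) and every (x,y) ∈ B_1 × B_2, either (x,y) = (b_1,b_2) and d_t(x,y) = R, or d_t(x,y) ≥ R + δ; in particular no cross distance d_t(x,y) lies strictly between R and R + δ. -/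
/-- if moreover every cross pair other than `(b₁,b₂)` is at distance
at least `R+δ` in `d`, then for every `t ∈ [0,1)` each cross distance of `d_t` is
either exactly `R` (attained only at `(b₁,b₂)`) or at least `R+δ`; in particular no
cross distance of `d_t` lies strictly between `R` and `R+δ`. -/
theorem stmt14 {X : Type*} [Fintype X] (d : X → X → ℝ) (hd : IsMetric d)
    (B1 : Set X) (hB1 : B1.Nonempty) (hB2 : B1ᶜ.Nonempty)
    (b1 b2 : X) (hb1 : b1 ∈ B1) (hb2 : b2 ∈ B1ᶜ)
    (R : ℝ) (hR : d b1 b2 = R) (hRpos : 0 < R) (δ : ℝ) (hδ : 0 ≤ δ)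
    (hfar : ∀ x ∈ B1, ∀ y ∈ B1ᶜ, ¬(x = b1 ∧ y = b2) → R + δ ≤ d x y) :
    ∀ t, 0 ≤ t → t < 1 → ∀ x ∈ B1, ∀ y ∈ B1ᶜ,
      ((x = b1 ∧ y = b2 ∧ dBridge d B1 b1 b2 R δ t x y = R) ∨
        R + δ ≤ dBridge d B1 b1 b2 R δ t x y) ∧
      ¬(R < dBridge d B1 b1 b2 R δ t x y ∧ dBridge d B1 b1 b2 R δ t x y < R + δ) := by
  intro t ht0 ht1 x hx y hy
  have hxy : x ≠ y := fun h => hy (h ▸ hx)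
  have key : (x = b1 ∧ y = b2 ∧ dBridge d B1 b1 b2 R δ t x y = R) ∨
      R + δ ≤ dBridge d B1 b1 b2 R δ t x y := by
    by_cases hc : x = b1 ∧ y = b2
    · left
      refine ⟨hc.1, hc.2, ?_⟩
      obtain ⟨h1, h2⟩ := hc; subst h1; subst h2
      simp [dBridge, hxy]
    · right
      have hdxy : R + δ ≤ d x y := hfar x hx y hy hc
      have hblk : ¬((x ∈ B1 ∧ y ∈ B1) ∨ (x ∉ B1 ∧ y ∉ B1)) := by
        rintro (⟨_, h⟩ | ⟨h, _⟩) <;> [exact hy h; exact h hx]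
      have hnb : ¬(x = b2 ∧ y = b1) := fun ⟨h1, _⟩ => hb2 (h1 ▸ hx)
      have hbr : ¬((x = b1 ∧ y = b2) ∨ (x = b2 ∧ y = b1)) := by tauto
      rw [dBridge, if_neg hxy, if_neg hbr, if_neg hblk]
      have h1t : 0 ≤ 1 - t := by linarith
      split
      · nlinarith
      · nlinarith
  refine ⟨key, ?_⟩
  rcases key with ⟨_, _, h⟩ | h
  · rintro ⟨h1, _⟩; rw [h] at h1; exact lt_irrefl _ h1
  · rintro ⟨_, h2⟩; linarith
end

section
/- Let α ≥ 1 be an integer. Let X = B_1 ∪ B_2 where B_1 = {x_0,...,x_{α+1}} and B_2 = {y_0,...,y_{α+1}} are disjoint sets of α+2 points each, with d(x_i,x_j) = 1 and d(y_i,y_j) = 1 for all i ≠ j, d(x_0,y_0) = 2, and d(x_i,y_j) = 3 for all (i,j) ≠ (0,0). Then (X,d) is a metric space in which: (i) each of B_1 and B_2 is a set of α+2 points with all pairwise distances ≤ 2; and (ii) every subset S ⊆ X with all pairwise distances ≤ 2 that intersects both B_1 and B_2 satisfies S ⊆ {x_0,y_0}. Consequently, the largest such 'cross' subset has 2 elements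 while each block contains a subset of α+2 points with pairwise distances ≤ 2, so α·(|S|−1) ≤ α < α+1 for every cross subset S, i.e. the pair {B_1,B_2} fails the unchaining condition P_α of α-unchaining single linkage at scale R = 2. -/
/-- The metric of the example witnessing that `P_α` is bridge-unchaining: two blocks
of `α+2` points each with internal distances `1`, bridged by the single edge
`(x₀,y₀)` of length `2`, all other cross distances being `3`. -/
noncomputable def dAlpha (α : ℕ) :
    (Fin (α + 2) ⊕ Fin (α + 2)) → (Fin (α + 2) ⊕ Fin (α + 2)) → ℝ
  | Sum.inl i, Sum.inl j => if i = j then 0 else 1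
  | Sum.inr i, Sum.inr j => if i = j then 0 else 1
  | Sum.inl i, Sum.inr j => if i = 0 ∧ j = 0 then 2 else 3
  | Sum.inr i, Sum.inl j => if i = 0 ∧ j = 0 then 2 else 3

/-- `(X, dAlpha α)` is a metric space in which (i) each block
`B₁ = inl(Fin (α+2))`, `B₂ = inr(Fin (α+2))` consists of `α+2` points with all
pairwise distances `≤ 2`, and (ii) every subset `S` with all pairwise distances `≤ 2`
meeting both blocks is contained in `{x₀, y₀}`; consequently every such cross subset
`S` has at most `2` elements and satisfies `α(|S|−1) ≤ α < α+1`, i.e. the pair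
`{B₁,B₂}` fails the unchaining condition `P_α` at scale `R = 2`. -/
theorem stmt15 (α : ℕ) (hα : 1 ≤ α) :
    IsMetric (dAlpha α) ∧
    ((Finset.univ.image (Sum.inl : Fin (α + 2) → Fin (α + 2) ⊕ Fin (α + 2))).card = α + 2 ∧
     (Finset.univ.image (Sum.inr : Fin (α + 2) → Fin (α + 2) ⊕ Fin (α + 2))).card = α + 2 ∧
     (∀ i j : Fin (α + 2), dAlpha α (Sum.inl i) (Sum.inl j) ≤ 2) ∧
     (∀ i j : Fin (α + 2), dAlpha α (Sum.inr i) (Sum.inr j) ≤ 2)) ∧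
    (∀ S : Finset (Fin (α + 2) ⊕ Fin (α + 2)),
      (∀ x ∈ S, ∀ y ∈ S, dAlpha α x y ≤ 2) →
      (∃ i, Sum.inl i ∈ S) → (∃ j, Sum.inr j ∈ S) →
      (S ⊆ {Sum.inl 0, Sum.inr 0} ∧ S.card ≤ 2 ∧
        α * (S.card - 1) ≤ α ∧ α < α + 1)) := by
  refine ⟨⟨?_, ?_, ?_⟩, ⟨?_, ?_, ?_, ?_⟩, ?_⟩
  · rintro (i | i) (j | j) <;> simp [dAlpha, eq_comm, and_comm]
  · rintro (i | i) (j | j) <;> simp [dAlpha] <;> split_ifs <;> norm_num <;> tauto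
  · rintro (i | i) (j | j) (k | k) <;> simp only [dAlpha] <;>
      split_ifs <;> simp_all <;> norm_num
  · rw [Finset.card_image_of_injective _ Sum.inl_injective]; simp
  · rw [Finset.card_image_of_injective _ Sum.inr_injective]; simp
  · intro i j; simp only [dAlpha]; split_ifs <;> norm_num
  · intro i j; simp only [dAlpha]; split_ifs <;> norm_num
  · rintro S hS ⟨i, hi⟩ ⟨j, hj⟩
    have hij : i = 0 ∧ j = 0 := by
      by_contra h
      have := hS _ hi _ hj
      simp only [dAlpha, if_neg h] at this
      norm_num at this
    obtain ⟨rfl, rfl⟩ := hij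
    have hsub : S ⊆ {Sum.inl 0, Sum.inr 0} := by
      intro x hx
      rcases x with k | k
      · have := hS _ hx _ hj
        simp only [dAlpha] at this
        split_ifs at this with h
        · simp [h.1]
        · norm_num at this
      · have := hS _ hi _ hx
        simp only [dAlpha] at this
        split_ifs at this with h
        · simp [h.2]
        · norm_num at this
    have hcard : S.card ≤ 2 := le_trans (Finset.card_le_card hsub)
      (le_trans (Finset.card_insert_le _ _) (by simp))
    exact ⟨hsub, hcard, by simpa using Nat.mul_le_mul_left α (show S.card - 1 ≤ 1 by omega), by omega⟩
end

section
/- Complete linkage and average linkage hierarchical clustering are faithful: for every finite ultrametric space (U,u), the standard linkage-based recursions with linkage functions ℓ^CL and ℓ^AL produce the same dendrogram as single linkage, and their output ultrametric spaces equal (U,u) itself: 𝔗^CL_U(U,u) = (U,u) and 𝔗^AL_U(U,u) = (U,u). -/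
open Classical in
/-- The block (equivalence class) of `x` under the relation `e`. -/
noncomputable def cls {X : Type*} [Fintype X] (e : X → X → Prop) (x : X) : Finset X :=
  Finset.univ.filter fun y => e x y

/-- The minimal linkage value `R_i = min{ℓ(B,B') : B ≠ B' ∈ Θ_i}` over pairs of
distinct blocks of the partition given by the relation `e`. -/
noncomputable def nextR {X : Type*} [Fintype X] (ℓ : Finset X → Finset X → ℝ)
    (e : X → X → Prop) : ℝ :=
  sInf { r | ∃ x y : X, ¬ e x y ∧ ℓ (cls e x) (cls e y) = r }

/-- Merge the blocks of `e` along the equivalence relation generated by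
`ℓ(B,B') ≤ R` on blocks. -/
def mergeRel {X : Type*} [Fintype X] (ℓ : Finset X → Finset X → ℝ)
    (e : X → X → Prop) (R : ℝ) : X → X → Prop :=
  Relation.EqvGen fun a b => e a b ∨ ℓ (cls e a) (cls e b) ≤ R

open Classical in
/-- One step of the standard linkage-based recursion; the state is the pair
(current partition, given as a relation; current merging scale).  Once the partition
is the one-block partition the state is frozen. -/
noncomputable def stdStep {X : Type*} [Fintype X] (ℓ : Finset X → Finset X → ℝ) :
    (X → X → Prop) × ℝ → (X → X → Prop) × ℝ :=
  fun s => if ∀ x y, s.1 x y then s else (mergeRel ℓ s.1 (nextR ℓ s.1), nextR ℓ s.1)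

/-- The sequence of states `(Θ_{i+1}, R_i)` of the standard linkage-based recursion
`𝔗(ℓ,∅)`, starting with the partition into singletons at scale `R₀ = 0`. -/
noncomputable def stdState {X : Type*} [Fintype X] (ℓ : Finset X → Finset X → ℝ) :
    ℕ → (X → X → Prop) × ℝ
  | 0 => (Eq, 0)
  | i + 1 => stdStep ℓ (stdState ℓ i)

/-- The dendrogram of the standard linkage-based method: `x ∼ y` at scale `r` iff
they lie in a common block of `θ(r) = Θ_{max{i : R_i ≤ r}}` (for the nested partitions
`Θ_i` this is equivalent to lying in a common block of some `Θ_i` with `R_i ≤ r`). -/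
def dendroRel {X : Type*} [Fintype X] (ℓ : Finset X → Finset X → ℝ) (r : ℝ)
    (x y : X) : Prop :=
  ∃ i, (stdState ℓ i).2 ≤ r ∧ (stdState ℓ i).1 x y

/-- The output ultrametric of the standard linkage-based method `𝔗(ℓ,∅)`:
`u(x,y)` is the least scale `r ≥ 0` at which `x` and `y` lie in a common block of
the dendrogram. -/
noncomputable def stdUltra {X : Type*} [Fintype X] (ℓ : Finset X → Finset X → ℝ)
    (x y : X) : ℝ :=
  sInf { r | 0 ≤ r ∧ dendroRel ℓ r x y }

section Aux16
set_option linter.unusedSectionVars false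

variable {U : Type*} [Fintype U] [Nonempty U]

lemma um_nonneg {u : U → U → ℝ} (hu : IsUltrametricD u) (x y : U) : 0 ≤ u x y := by
  obtain ⟨⟨hsymm, hzero, htri⟩, -⟩ := hu
  have h := htri x y x
  rw [(hzero x x).2 rfl, hsymm y x] at h
  linarith

lemma um_self {u : U → U → ℝ} (hu : IsUltrametricD u) (x : U) : u x x = 0 :=
  (hu.1.2.1 x x).2 rfl

lemma um_cross {u : U → U → ℝ} (hu : IsUltrametricD u) {r : ℝ} {x y a b : U}
    (ha : u x a ≤ r) (hb : u y b ≤ r) (hxy : r < u x y) : u a b = u x y := by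
  obtain ⟨⟨hsymm, hzero, -⟩, hstr⟩ := hu
  have h1 : u a b ≤ u x y := by
    calc u a b ≤ max (u a x) (u x b) := hstr a x b
      _ ≤ max r (max (u x y) (u y b)) := by
          exact max_le_max (by rw [hsymm]; exact ha) (hstr x y b)
      _ ≤ u x y := max_le hxy.le (max_le le_rfl (hb.trans hxy.le))
  have h2 : u x y ≤ u a b := by
    have t1 : u x y ≤ max (u x a) (u a y) := hstr x a y
    have t2 : u a y ≤ max (u a b) (u b y) := hstr a b y
    have hby : u b y ≤ r := by rw [hsymm]; exact hb
    rcases le_max_iff.1 t1 with h | h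
    · linarith
    rcases le_max_iff.1 (h.trans t2) with h' | h'
    · exact h'
    · linarith
  linarith

/-- The set of values of `u` above `r`. -/
def valsAbove (u : U → U → ℝ) (r : ℝ) : Set ℝ :=
  {v | ∃ x y : U, ¬ u x y ≤ r ∧ u x y = v}

lemma valsAbove_finite (u : U → U → ℝ) (r : ℝ) : (valsAbove u r).Finite := by
  apply Set.Finite.subset (Set.finite_range (fun p : U × U => u p.1 p.2))
  rintro v ⟨x, y, -, rfl⟩
  exact ⟨(x, y), rfl⟩

noncomputable def canonR (u : U → U → ℝ) (r : ℝ) : ℝ := sInf (valsAbove u r)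

open Classical in
noncomputable def canonState (u : U → U → ℝ) : ℕ → ℝ
  | 0 => 0
  | i + 1 => if ∀ x y : U, u x y ≤ canonState u i then canonState u i
             else canonR u (canonState u i)

lemma canonR_mem {u : U → U → ℝ} {r : ℝ} (h : ¬ ∀ x y : U, u x y ≤ r) :
    canonR u r ∈ valsAbove u r := by
  push_neg at h
  obtain ⟨x, y, hxy⟩ := h
  exact Set.Nonempty.csInf_mem ⟨u x y, x, y, not_le.2 hxy, rfl⟩ (valsAbove_finite u r)

lemma canonR_gt {u : U → U → ℝ} {r : ℝ} (h : ¬ ∀ x y : U, u x y ≤ r) :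
    r < canonR u r := by
  obtain ⟨x, y, hxy, hv⟩ := canonR_mem h
  rw [← hv]; exact not_le.1 hxy

lemma canonState_nonneg {u : U → U → ℝ} : ∀ i, 0 ≤ canonState u i := by
  intro i
  induction i with
  | zero => simp [canonState]
  | succ i ih =>
    rw [canonState]
    split
    · exact ih
    · next h => exact ih.trans (canonR_gt h).le

lemma cls_mem {u : U → U → ℝ} {r : ℝ} {x a : U} :
    a ∈ cls (fun p q => u p q ≤ r) x ↔ u x a ≤ r := by
  simp [cls]

/-- A linkage function behaving like single linkage on ultrametric balls. -/
def GoodL (u : U → U → ℝ) (ℓ : Finset U → Finset U → ℝ) : Prop :=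
  ∀ r : ℝ, 0 ≤ r → ∀ x y : U, r < u x y →
    ℓ (cls (fun p q => u p q ≤ r) x) (cls (fun p q => u p q ≤ r) y) = u x y

lemma cross_set_eq {u : U → U → ℝ} (hu : IsUltrametricD u) {r : ℝ} (hr : 0 ≤ r)
    {x y : U} (hxy : r < u x y) :
    {v | ∃ a ∈ cls (fun p q => u p q ≤ r) x, ∃ b ∈ cls (fun p q => u p q ≤ r) y, u a b = v}
      = {u x y} := by
  ext v
  simp only [Set.mem_setOf_eq, Set.mem_singleton_iff]
  constructor
  · rintro ⟨a, ha, b, hb, rfl⟩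
    exact um_cross hu (cls_mem.1 ha) (cls_mem.1 hb) hxy
  · rintro rfl
    exact ⟨x, cls_mem.2 (by rw [um_self hu]; exact hr),
      y, cls_mem.2 (by rw [um_self hu]; exact hr), rfl⟩

lemma goodSL {u : U → U → ℝ} (hu : IsUltrametricD u) : GoodL u (ellSL u) := by
  intro r hr x y hxy
  rw [ellSL]
  have h : {v | ∃ a ∈ cls (fun p q => u p q ≤ r) x, ∃ b ∈ cls (fun p q => u p q ≤ r) y, u a b = v} = {u x y} := cross_set_eq hu hr hxy
  rw [h, csInf_singleton]

lemma goodCL {u : U → U → ℝ} (hu : IsUltrametricD u) : GoodL u (ellCL u) := by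
  intro r hr x y hxy
  rw [ellCL]
  have h : {v | ∃ a ∈ cls (fun p q => u p q ≤ r) x, ∃ b ∈ cls (fun p q => u p q ≤ r) y, u a b = v} = {u x y} := cross_set_eq hu hr hxy
  rw [h, csSup_singleton]

lemma goodAL {u : U → U → ℝ} (hu : IsUltrametricD u) : GoodL u (ellAL u) := by
  intro r hr x y hxy
  set A := cls (fun p q => u p q ≤ r) x with hA
  set B := cls (fun p q => u p q ≤ r) y with hB
  have hxA : x ∈ A := cls_mem.2 (by rw [um_self hu]; exact hr)
  have hyB : y ∈ B := cls_mem.2 (by rw [um_self hu]; exact hr)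
  have hsum : ∑ a ∈ A, ∑ b ∈ B, u a b = (A.card * B.card : ℝ) * u x y := by
    rw [Finset.sum_congr rfl (fun a ha => Finset.sum_congr rfl
      (fun b hb => um_cross hu (cls_mem.1 ha) (cls_mem.1 hb) hxy))]
    simp [Finset.sum_const, mul_assoc]
    rfl
  have hA0 : (A.card : ℝ) ≠ 0 := by
    simp [Finset.card_ne_zero_of_mem hxA]
  have hB0 : (B.card : ℝ) ≠ 0 := by
    simp [Finset.card_ne_zero_of_mem hyB]
  rw [ellAL, hsum, mul_comm, mul_div_assoc, div_self (mul_ne_zero hA0 hB0), mul_one]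


lemma stdState_eq {u : U → U → ℝ} (hu : IsUltrametricD u) {ℓ : Finset U → Finset U → ℝ}
    (hg : GoodL u ℓ) (i : ℕ) :
    stdState ℓ i = (fun x y : U => u x y ≤ canonState u i, canonState u i) := by
  induction i with
  | zero =>
    have : (Eq : U → U → Prop) = fun x y : U => u x y ≤ 0 := by
      funext x y
      apply propext
      constructor
      · rintro rfl; rw [um_self hu]
      · intro h
        exact (hu.1.2.1 x y).1 (le_antisymm h (um_nonneg hu x y))
    simp only [stdState, canonState, this]
  | succ i ih =>
    have hr0 : 0 ≤ canonState u i := canonState_nonneg i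
    set r := canonState u i with hrdef
    rw [stdState, stdStep, ih]
    by_cases h : ∀ x y : U, u x y ≤ r
    · rw [if_pos h, canonState, if_pos h, ← ih]
    · rw [if_neg h, canonState, if_neg h]
      have hRr : r < canonR u r := canonR_gt h
      have hnext : nextR ℓ (fun x y : U => u x y ≤ r) = canonR u r := by
        rw [nextR, canonR]
        congr 1
        ext v
        simp only [Set.mem_setOf_eq, valsAbove]
        constructor
        · rintro ⟨x, y, hxy, rfl⟩
          exact ⟨x, y, hxy, (hg r hr0 x y (not_le.1 hxy)).symm⟩
        · rintro ⟨x, y, hxy, rfl⟩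
          exact ⟨x, y, hxy, hg r hr0 x y (not_le.1 hxy)⟩
      have hmerge : mergeRel ℓ (fun x y : U => u x y ≤ r) (canonR u r)
          = fun x y : U => u x y ≤ canonR u r := by
        funext a b
        apply propext
        constructor
        · intro hm
          induction hm with
          | rel p q hpq =>
            rcases hpq with h1 | h1
            · exact h1.trans hRr.le
            · by_cases h2 : u p q ≤ r
              · exact h2.trans hRr.le
              · rwa [hg r hr0 p q (not_le.1 h2)] at h1
          | refl p => rw [um_self hu]; exact hr0.trans hRr.le
          | symm p q _ ih2 => rw [hu.1.1 q p]; exact ih2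
          | trans p q s _ _ ih2 ih3 =>
            exact (hu.2 p q s).trans (max_le ih2 ih3)
        · intro hab
          apply Relation.EqvGen.rel
          by_cases h2 : u a b ≤ r
          · exact Or.inl h2
          · exact Or.inr (by rwa [hg r hr0 a b (not_le.1 h2)])
      rw [hnext, hmerge]

lemma exists_cover {u : U → U → ℝ} : ∃ N, ∀ x y : U, u x y ≤ canonState u N := by
  classical
  set V : Finset ℝ := Finset.image (fun p : U × U => u p.1 p.2) Finset.univ with hV
  have key : ∀ n i, (V.filter (fun v => canonState u i < v)).card ≤ n →
      ∃ N, ∀ x y : U, u x y ≤ canonState u N := by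
    intro n
    induction n with
    | zero =>
      intro i hi
      refine ⟨i, fun x y => ?_⟩
      by_contra hxy
      have : u x y ∈ V.filter (fun v => canonState u i < v) := by
        simp only [Finset.mem_filter, hV, Finset.mem_image]
        exact ⟨⟨(x, y), Finset.mem_univ _, rfl⟩, not_le.1 hxy⟩
      have := Finset.card_pos.2 ⟨_, this⟩
      omega
    | succ n ihn =>
      intro i hi
      by_cases h : ∀ x y : U, u x y ≤ canonState u i
      · exact ⟨i, h⟩
      · have hs : canonState u (i + 1) = canonR u (canonState u i) := by
          rw [canonState, if_neg h]
        have hlt : canonState u i < canonState u (i + 1) := by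
          rw [hs]; exact canonR_gt h
        have hmem : canonState u (i + 1) ∈ V := by
          obtain ⟨x, y, hxy, hv⟩ := canonR_mem h
          rw [hs, ← hv]
          simp only [hV, Finset.mem_image]
          exact ⟨(x, y), Finset.mem_univ _, rfl⟩
        have hsub : V.filter (fun v => canonState u (i+1) < v) ⊂
            V.filter (fun v => canonState u i < v) := by
          constructor
          · intro v hv
            simp only [Finset.mem_filter] at hv ⊢
            exact ⟨hv.1, hlt.trans hv.2⟩
          · intro hcon
            have := hcon (Finset.mem_filter.2 ⟨hmem, hlt⟩)
            simp at this
        have := Finset.card_lt_card hsub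
        exact ihn (i + 1) (by omega)
  exact key _ 0 le_rfl

lemma exists_canon_eq {u : U → U → ℝ} (hu : IsUltrametricD u) (x y : U) :
    ∃ i, canonState u i = u x y := by
  obtain ⟨N, hN⟩ := exists_cover (u := u)
  have hex : ∃ i, u x y ≤ canonState u i := ⟨N, hN x y⟩
  classical
  set i := Nat.find hex with hi
  have hle : u x y ≤ canonState u i := Nat.find_spec hex
  rcases Nat.eq_zero_or_pos i with h0 | hpos
  · refine ⟨0, ?_⟩
    rw [h0] at hle
    simp only [canonState] at hle ⊢
    exact le_antisymm hle (um_nonneg hu x y) |>.symm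
  · obtain ⟨j, hij⟩ : ∃ j, i = j + 1 := ⟨i - 1, by omega⟩
    rw [hij] at hle
    have hnot : ¬ u x y ≤ canonState u j := Nat.find_min hex (by omega)
    have hne : ¬ ∀ a b : U, u a b ≤ canonState u j := fun hall => hnot (hall x y)
    have hs : canonState u (j + 1) = canonR u (canonState u j) := by
      rw [canonState, if_neg hne]
    refine ⟨j + 1, le_antisymm ?_ ?_⟩
    · rw [hs]
      refine csInf_le ((valsAbove_finite u _).bddBelow) ⟨x, y, hnot, rfl⟩
    · exact hle


lemma dendroRel_iff' {u : U → U → ℝ} (hu : IsUltrametricD u) {ℓ : Finset U → Finset U → ℝ}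
    (hg : GoodL u ℓ) (r : ℝ) (x y : U) :
    dendroRel ℓ r x y ↔ ∃ i, canonState u i ≤ r ∧ u x y ≤ canonState u i := by
  simp only [dendroRel, stdState_eq hu hg]

lemma stdUltra_eq' {u : U → U → ℝ} (hu : IsUltrametricD u) {ℓ : Finset U → Finset U → ℝ}
    (hg : GoodL u ℓ) (x y : U) : stdUltra ℓ x y = u x y := by
  rw [stdUltra]
  have hmem : u x y ∈ {r | 0 ≤ r ∧ dendroRel ℓ r x y} := by
    obtain ⟨i, hi⟩ := exists_canon_eq hu x y
    exact ⟨um_nonneg hu x y, (dendroRel_iff' hu hg _ x y).2 ⟨i, hi.le, hi.ge⟩⟩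
  have hlb : ∀ r ∈ {r | 0 ≤ r ∧ dendroRel ℓ r x y}, u x y ≤ r := by
    rintro r ⟨-, hd⟩
    obtain ⟨i, h1, h2⟩ := (dendroRel_iff' hu hg _ x y).1 hd
    exact h2.trans h1
  exact le_antisymm (csInf_le ⟨u x y, hlb⟩ hmem) (le_csInf ⟨_, hmem⟩ hlb)

end Aux16
/-- complete linkage and average linkage are faithful: on a finite
ultrametric space `(U,u)`, the standard linkage-based recursions for `ℓ^CL` and
`ℓ^AL` produce the same dendrogram as single linkage `ℓ^SL`, and their output
ultrametrics are `u` itself. -/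
theorem stmt16 {U : Type*} [Fintype U] [Nonempty U] (u : U → U → ℝ)
    (hu : IsUltrametricD u) :
    (∀ r : ℝ, ∀ x y : U,
      (dendroRel (ellCL u) r x y ↔ dendroRel (ellSL u) r x y) ∧
      (dendroRel (ellAL u) r x y ↔ dendroRel (ellSL u) r x y)) ∧
    (∀ x y, stdUltra (ellCL u) x y = u x y) ∧
    (∀ x y, stdUltra (ellAL u) x y = u x y) := by
  refine ⟨fun r x y => ⟨?_, ?_⟩, fun x y => stdUltra_eq' hu (goodCL hu) x y,
    fun x y => stdUltra_eq' hu (goodAL hu) x y⟩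
  · rw [dendroRel_iff' hu (goodCL hu), dendroRel_iff' hu (goodSL hu)]
  · rw [dendroRel_iff' hu (goodAL hu), dendroRel_iff' hu (goodSL hu)]
end

section
/- Complete linkage and average linkage hierarchical clustering are not stable in the Gromov–Hausdorff sense: for every δ > 0 there exist finite metric spaces X and Y with d_GH(X,Y) ≤ δ such that d_GH(𝔗^CL_U(X), 𝔗^CL_U(Y)) ≥ 1/2 and d_GH(𝔗^AL_U(X), 𝔗^AL_U(Y)) ≥ 1/4. Concretely, one may take X = I(1,1) and Y = I(1,1+δ): then 𝔗^CL_U(X) = 𝔗^AL_U(X) is the three-point ultrametric space with all distances 1, 𝔗^CL_U(Y) is the three-point ultrametric space with distances 1, 2+δ, 2+δ, and 𝔗^AL_U(Y) is the three-point ultrametric space with distances 1, (3+2δ)/2, (3+2δ)/2. -/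
section Helpers

lemma cls_eq_singleton {X : Type*} [Fintype X] (x : X) : cls (@Eq X) x = {x} := by
  ext y; simp [cls, eq_comm]

lemma stdUltra_self {X : Type*} [Fintype X] (ℓ : Finset X → Finset X → ℝ) (x : X) :
    stdUltra ℓ x x = 0 := by
  have hset : {r | 0 ≤ r ∧ dendroRel ℓ r x x} = Set.Ici 0 := by
    ext r
    constructor
    · exact fun h => h.1
    · exact fun h => ⟨h, 0, le_of_eq rfl |>.trans h, rfl⟩
  rw [stdUltra, hset, csInf_Ici]

lemma stdState_add {X : Type*} [Fintype X] (ℓ : Finset X → Finset X → ℝ) {i : ℕ}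
    (h : ∀ x y, (stdState ℓ i).1 x y) (k : ℕ) :
    stdState ℓ (i + k) = stdState ℓ i := by
  induction k with
  | zero => rfl
  | succ k ih =>
      have : i + (k+1) = (i + k) + 1 := rfl
      rw [this]
      show stdStep ℓ (stdState ℓ (i + k)) = _
      rw [ih]
      simp only [stdStep, if_pos h]

lemma xcase (ℓ : Finset (Fin 3) → Finset (Fin 3) → ℝ) (a c : ℝ) (ha : 0 ≤ a) (hac : a ≤ c)
    (h01 : ℓ {0} {1} = a) (h12 : ℓ {1} {2} = a)
    (h02 : ℓ {0} {2} = c) (h20 : ℓ {2} {0} = c)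
    (h10 : ℓ {1} {0} = a) (h21 : ℓ {2} {1} = a) :
    ∀ x y : Fin 3, x ≠ y → stdUltra ℓ x y = a := by
  have hR : nextR ℓ Eq = a := by
    have hset : {r | ∃ x y : Fin 3, ¬ x = y ∧ ℓ (cls Eq x) (cls Eq y) = r} = {a, c} := by
      ext r
      constructor
      · rintro ⟨x, y, hxy, rfl⟩
        fin_cases x <;> fin_cases y <;>
          simp_all [cls_eq_singleton, h01, h10, h12, h21, h02, h20]
      · rintro (rfl | rfl)
        · exact ⟨0, 1, by decide, by rw [cls_eq_singleton, cls_eq_singleton, h01]⟩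
        · exact ⟨0, 2, by decide, by rw [cls_eq_singleton, cls_eq_singleton, h02]⟩
    rw [nextR, hset, csInf_pair, inf_eq_left.mpr hac]
  have full1 : ∀ x y : Fin 3, mergeRel ℓ Eq a x y := by
    have r01 : mergeRel ℓ Eq a 0 1 :=
      Relation.EqvGen.rel _ _ (Or.inr (by rw [cls_eq_singleton, cls_eq_singleton, h01]))
    have r12 : mergeRel ℓ Eq a 1 2 :=
      Relation.EqvGen.rel _ _ (Or.inr (by rw [cls_eq_singleton, cls_eq_singleton, h12]))
    intro x y
    fin_cases x <;> fin_cases y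
    · exact Relation.EqvGen.refl _
    · exact r01
    · exact Relation.EqvGen.trans _ _ _ r01 r12
    · exact Relation.EqvGen.symm _ _ r01
    · exact Relation.EqvGen.refl _
    · exact r12
    · exact Relation.EqvGen.symm _ _ (Relation.EqvGen.trans _ _ _ r01 r12)
    · exact Relation.EqvGen.symm _ _ r12
    · exact Relation.EqvGen.refl _
  have st1 : stdState ℓ 1 = (mergeRel ℓ Eq a, a) := by
    have hne : ¬ ∀ x y : Fin 3, (stdState ℓ 0).1 x y :=
      fun h => (by decide : ¬ (0:Fin 3) = 1) (h 0 1)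
    show stdStep ℓ (stdState ℓ 0) = _
    simp only [stdStep, if_neg hne]
    show (mergeRel ℓ Eq (nextR ℓ Eq), nextR ℓ Eq) = (mergeRel ℓ Eq a, a)
    rw [hR]
  intro x y hxy
  have hset : {r | 0 ≤ r ∧ dendroRel ℓ r x y} = Set.Ici a := by
    ext r
    constructor
    · rintro ⟨hr, i, hRi, hrel⟩
      rcases i with _ | n
      · exact absurd hrel hxy
      · have h1 : stdState ℓ (1 + n) = stdState ℓ 1 := by
          apply stdState_add
          rw [st1]; exact full1
        rw [show n + 1 = 1 + n from Nat.add_comm n 1, h1, st1] at hRi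
        exact hRi
    · intro hr
      exact ⟨ha.trans hr, 1, by rw [st1]; exact hr, by rw [st1]; exact full1 x y⟩
  rw [stdUltra, hset, csInf_Ici]

lemma ycase (ℓ : Finset (Fin 3) → Finset (Fin 3) → ℝ) (a b c R : ℝ)
    (ha : 0 ≤ a) (hab : a < b) (hac : a < c) (haR : a < R)
    (h01 : ℓ {0} {1} = a) (h10 : ℓ {1} {0} = a)
    (h12 : ℓ {1} {2} = b) (h21 : ℓ {2} {1} = b)
    (h02 : ℓ {0} {2} = c) (h20 : ℓ {2} {0} = c)
    (hA : ℓ {0, 1} {2} = R) (hB : ℓ {2} {0, 1} = R) :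
    (∀ x y : Fin 3, x ≠ y → ((x = 2) ↔ (y = 2)) → stdUltra ℓ x y = a) ∧
    (∀ x y : Fin 3, ¬ ((x = 2) ↔ (y = 2)) → stdUltra ℓ x y = R) := by
  have hR1 : nextR ℓ Eq = a := by
    have hset : {r | ∃ x y : Fin 3, ¬ x = y ∧ ℓ (cls Eq x) (cls Eq y) = r} = {a, b, c} := by
      ext r
      constructor
      · rintro ⟨x, y, hxy, rfl⟩
        fin_cases x <;> fin_cases y <;>
          simp_all [cls_eq_singleton, h01, h10, h12, h21, h02, h20]
      · rintro (rfl | rfl | rfl)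
        · exact ⟨0, 1, by decide, by rw [cls_eq_singleton, cls_eq_singleton, h01]⟩
        · exact ⟨1, 2, by decide, by rw [cls_eq_singleton, cls_eq_singleton, h12]⟩
        · exact ⟨0, 2, by decide, by rw [cls_eq_singleton, cls_eq_singleton, h02]⟩
    rw [nextR, hset, csInf_insert, csInf_pair]
    · rw [inf_eq_left.mpr (le_inf hab.le hac.le)]
    · exact ((Set.finite_singleton c).insert b).bddBelow
    · exact ⟨b, by simp⟩
  have e1char : ∀ x y : Fin 3, mergeRel ℓ Eq a x y ↔ ((x = 2) ↔ (y = 2)) := by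
    intro x y
    constructor
    · intro h
      have hE : Equivalence (fun u v : Fin 3 => (u = 2) ↔ (v = 2)) :=
        ⟨fun _ => Iff.rfl, Iff.symm, Iff.trans⟩
      refine hE.eqvGen_iff.mp (Relation.EqvGen.mono ?_ x y h)
      intro u v huv
      rcases huv with rfl | huv
      · exact Iff.rfl
      · fin_cases u <;> fin_cases v <;>
          simp_all [cls_eq_singleton, h01, h10, h12, h21, h02, h20] <;> linarith
    · intro h
      fin_cases x <;> fin_cases y
      · exact Relation.EqvGen.refl _
      · exact Relation.EqvGen.rel _ _
          (Or.inr (by simp [cls_eq_singleton, h01]))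
      · simp at h
      · exact Relation.EqvGen.rel _ _
          (Or.inr (by simp [cls_eq_singleton, h10]))
      · exact Relation.EqvGen.refl _
      · simp at h
      · simp at h
      · simp at h
      · exact Relation.EqvGen.refl _
  set e1 : Fin 3 → Fin 3 → Prop := mergeRel ℓ Eq a with he1
  have cls0 : cls e1 0 = {0, 1} := by
    ext y
    simp only [cls, Finset.mem_filter, Finset.mem_univ, true_and, e1char]
    fin_cases y <;> decide
  have cls1 : cls e1 1 = {0, 1} := by
    ext y
    simp only [cls, Finset.mem_filter, Finset.mem_univ, true_and, e1char]
    fin_cases y <;> decide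
  have cls2 : cls e1 2 = {2} := by
    ext y
    simp only [cls, Finset.mem_filter, Finset.mem_univ, true_and, e1char]
    fin_cases y <;> decide
  have st1 : stdState ℓ 1 = (e1, a) := by
    have hne : ¬ ∀ x y : Fin 3, (stdState ℓ 0).1 x y :=
      fun h => (by decide : ¬ (0:Fin 3) = 1) (h 0 1)
    show stdStep ℓ (stdState ℓ 0) = _
    simp only [stdStep, if_neg hne]
    show (mergeRel ℓ Eq (nextR ℓ Eq), nextR ℓ Eq) = (e1, a)
    rw [hR1]
  have hR2 : nextR ℓ e1 = R := by
    have hset : {r | ∃ x y : Fin 3, ¬ e1 x y ∧ ℓ (cls e1 x) (cls e1 y) = r} = {R} := by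
      ext r
      constructor
      · rintro ⟨x, y, hxy, rfl⟩
        rw [e1char] at hxy
        fin_cases x <;> fin_cases y <;>
          first
            | (exact absurd (by decide) hxy)
            | (simp [cls0, cls1, cls2, hA, hB])
      · rintro rfl
        exact ⟨0, 2, by rw [e1char]; decide, by rw [cls0, cls2, hA]⟩
    rw [nextR, hset, csInf_singleton]
  have full2 : ∀ x y : Fin 3, mergeRel ℓ e1 R x y := by
    have r01 : mergeRel ℓ e1 R 0 1 :=
      Relation.EqvGen.rel _ _ (Or.inl ((e1char 0 1).mpr (by decide)))
    have r02 : mergeRel ℓ e1 R 0 2 :=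
      Relation.EqvGen.rel _ _ (Or.inr (by rw [cls0, cls2, hA]))
    have r12 : mergeRel ℓ e1 R 1 2 :=
      Relation.EqvGen.trans _ _ _ (Relation.EqvGen.symm _ _ r01) r02
    intro x y
    fin_cases x <;> fin_cases y
    · exact Relation.EqvGen.refl _
    · exact r01
    · exact r02
    · exact Relation.EqvGen.symm _ _ r01
    · exact Relation.EqvGen.refl _
    · exact r12
    · exact Relation.EqvGen.symm _ _ r02
    · exact Relation.EqvGen.symm _ _ r12
    · exact Relation.EqvGen.refl _
  have st2 : stdState ℓ 2 = (mergeRel ℓ e1 R, R) := by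
    have hne : ¬ ∀ x y : Fin 3, (stdState ℓ 1).1 x y := by
      rw [st1]
      intro h
      exact (by decide : ¬((0:Fin 3) = 2 ↔ (2:Fin 3) = 2)) ((e1char 0 2).mp (h 0 2))
    show stdStep ℓ (stdState ℓ 1) = _
    simp only [stdStep, if_neg hne]
    rw [st1]
    show (mergeRel ℓ e1 (nextR ℓ e1), nextR ℓ e1) = _
    rw [hR2]
  have stall : ∀ n : ℕ, stdState ℓ (2 + n) = (mergeRel ℓ e1 R, R) := by
    intro n
    rw [stdState_add ℓ (by rw [st2]; exact full2) n, st2]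
  constructor
  · intro x y hxy h
    have hset : {r | 0 ≤ r ∧ dendroRel ℓ r x y} = Set.Ici a := by
      ext r
      constructor
      · rintro ⟨hr, i, hRi, hrel⟩
        rcases i with _ | _ | n
        · exact absurd hrel hxy
        · rw [st1] at hRi; exact hRi
        · rw [show n + 1 + 1 = 2 + n from by omega, stall n] at hRi
          exact haR.le.trans hRi
      · intro hr
        exact ⟨ha.trans hr, 1, by rw [st1]; exact hr, by rw [st1]; exact (e1char x y).mpr h⟩
    rw [stdUltra, hset, csInf_Ici]
  · intro x y h
    have hset : {r | 0 ≤ r ∧ dendroRel ℓ r x y} = Set.Ici R := by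
      ext r
      constructor
      · rintro ⟨hr, i, hRi, hrel⟩
        rcases i with _ | _ | n
        · exact absurd (hrel ▸ Iff.rfl) h
        · rw [st1] at hrel
          exact absurd ((e1char x y).mp hrel) h
        · rw [show n + 1 + 1 = 2 + n from by omega, stall n] at hRi
          exact hRi
      · intro hr
        exact ⟨(ha.trans haR.le).trans hr, 2, by rw [st2]; exact hr,
          by rw [st2]; exact full2 x y⟩
    rw [stdUltra, hset, csInf_Ici]

lemma ellCL_single {X : Type*} [DecidableEq X] (d : X → X → ℝ) (x y : X) :
    ellCL d {x} {y} = d x y := by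
  have h : {r | ∃ a ∈ ({x} : Finset X), ∃ b ∈ ({y} : Finset X), d a b = r} = {d x y} := by
    ext r; simp [eq_comm]
  rw [ellCL, h, csSup_singleton]

lemma ellAL_single {X : Type*} [DecidableEq X] (d : X → X → ℝ) (x y : X) :
    ellAL d {x} {y} = d x y := by
  simp [ellAL]

lemma ellCL_pairA (d : Fin 3 → Fin 3 → ℝ) :
    ellCL d {0, 1} {2} = max (d 0 2) (d 1 2) := by
  have h : {r | ∃ a ∈ ({0, 1} : Finset (Fin 3)), ∃ b ∈ ({2} : Finset (Fin 3)), d a b = r}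
      = {d 0 2, d 1 2} := by
    ext r
    simp only [Finset.mem_insert, Finset.mem_singleton, Set.mem_setOf_eq, Set.mem_insert_iff,
      Set.mem_singleton_iff]
    constructor
    · rintro ⟨a, (rfl | rfl), b, rfl, rfl⟩ <;> simp
    · rintro (rfl | rfl)
      · exact ⟨0, by simp, 2, rfl, rfl⟩
      · exact ⟨1, by simp, 2, rfl, rfl⟩
  rw [ellCL, h, csSup_pair]

lemma ellCL_pairB (d : Fin 3 → Fin 3 → ℝ) :
    ellCL d {2} {0, 1} = max (d 2 0) (d 2 1) := by
  have h : {r | ∃ a ∈ ({2} : Finset (Fin 3)), ∃ b ∈ ({0, 1} : Finset (Fin 3)), d a b = r}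
      = {d 2 0, d 2 1} := by
    ext r
    simp only [Finset.mem_insert, Finset.mem_singleton, Set.mem_setOf_eq, Set.mem_insert_iff,
      Set.mem_singleton_iff]
    constructor
    · rintro ⟨a, rfl, b, (rfl | rfl), rfl⟩ <;> simp
    · rintro (rfl | rfl)
      · exact ⟨2, rfl, 0, by simp, rfl⟩
      · exact ⟨2, rfl, 1, by simp, rfl⟩
  rw [ellCL, h, csSup_pair]

lemma ellAL_pairA (d : Fin 3 → Fin 3 → ℝ) :
    ellAL d {0, 1} {2} = (d 0 2 + d 1 2) / 2 := by
  rw [ellAL]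
  rw [Finset.sum_pair (by decide : (0 : Fin 3) ≠ 1)]
  simp [Finset.sum_singleton]

lemma ellAL_pairB (d : Fin 3 → Fin 3 → ℝ) :
    ellAL d {2} {0, 1} = (d 2 0 + d 2 1) / 2 := by
  rw [ellAL]
  simp [Finset.sum_pair (by decide : (0 : Fin 3) ≠ 1)]

end Helpers

/-- complete linkage and average linkage are not stable in the
Gromov–Hausdorff sense: for every `δ > 0`, the spaces `X = I(1,1) = {0,1,2} ⊆ ℝ`
and `Y = I(1,1+δ) = {0,1,2+δ} ⊆ ℝ` satisfy `d_GH(X,Y) ≤ δ` while the output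
ultrametrics of `𝔗^CL` (resp. `𝔗^AL`) are at Gromov–Hausdorff distance at least
`1/2` (resp. `1/4`); the output ultrametrics are the explicit three-point
ultrametric spaces described below. -/
theorem stmt17 (δ : ℝ) (hδ : 0 < δ) (dX dY : Fin 3 → Fin 3 → ℝ)
    (hdX : ∀ i j, dX i j = |(![0, 1, 2] : Fin 3 → ℝ) i - (![0, 1, 2] : Fin 3 → ℝ) j|)
    (hdY : ∀ i j, dY i j =
      |(![0, 1, 2 + δ] : Fin 3 → ℝ) i - (![0, 1, 2 + δ] : Fin 3 → ℝ) j|) :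
    ghDist dX dY ≤ δ ∧
    (1 / 2 : ℝ) ≤ ghDist (stdUltra (ellCL dX)) (stdUltra (ellCL dY)) ∧
    (1 / 4 : ℝ) ≤ ghDist (stdUltra (ellAL dX)) (stdUltra (ellAL dY)) ∧
    (∀ i j, i ≠ j → stdUltra (ellCL dX) i j = 1 ∧ stdUltra (ellAL dX) i j = 1) ∧
    (stdUltra (ellCL dY) 0 1 = 1 ∧ stdUltra (ellCL dY) 0 2 = 2 + δ ∧
      stdUltra (ellCL dY) 1 2 = 2 + δ) ∧
    (stdUltra (ellAL dY) 0 1 = 1 ∧ stdUltra (ellAL dY) 0 2 = (3 + 2 * δ) / 2 ∧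
      stdUltra (ellAL dY) 1 2 = (3 + 2 * δ) / 2) := by
  -- distance values
  obtain ⟨x01, x12, x02, x10, x21, x20, x00, x11, x22⟩ :
      dX 0 1 = 1 ∧ dX 1 2 = 1 ∧ dX 0 2 = 2 ∧ dX 1 0 = 1 ∧ dX 2 1 = 1 ∧ dX 2 0 = 2
        ∧ dX 0 0 = 0 ∧ dX 1 1 = 0 ∧ dX 2 2 = 0 := by
    refine ⟨?_, ?_, ?_, ?_, ?_, ?_, ?_, ?_, ?_⟩ <;> rw [hdX] <;> simp <;>
      first
        | linarith
        | (rw [abs_of_nonpos (by linarith)]; ring)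
        | (rw [abs_of_nonneg (by linarith)]; ring)
  obtain ⟨y01, y12, y02, y10, y21, y20, y00, y11, y22⟩ :
      dY 0 1 = 1 ∧ dY 1 2 = 1 + δ ∧ dY 0 2 = 2 + δ ∧ dY 1 0 = 1 ∧ dY 2 1 = 1 + δ
        ∧ dY 2 0 = 2 + δ ∧ dY 0 0 = 0 ∧ dY 1 1 = 0 ∧ dY 2 2 = 0 := by
    refine ⟨?_, ?_, ?_, ?_, ?_, ?_, ?_, ?_, ?_⟩ <;> rw [hdY] <;> simp <;>
      first
        | linarith
        | (rw [abs_of_nonpos (by linarith)]; ring)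
        | (rw [abs_of_nonneg (by linarith)]; ring)
  -- the four output ultrametrics
  have uCLX : ∀ x y : Fin 3, x ≠ y → stdUltra (ellCL dX) x y = 1 :=
    xcase _ 1 2 (by norm_num) (by norm_num)
      (by rw [ellCL_single, x01]) (by rw [ellCL_single, x12])
      (by rw [ellCL_single, x02]) (by rw [ellCL_single, x20])
      (by rw [ellCL_single, x10]) (by rw [ellCL_single, x21])
  have uALX : ∀ x y : Fin 3, x ≠ y → stdUltra (ellAL dX) x y = 1 :=
    xcase _ 1 2 (by norm_num) (by norm_num)
      (by rw [ellAL_single, x01]) (by rw [ellAL_single, x12])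
      (by rw [ellAL_single, x02]) (by rw [ellAL_single, x20])
      (by rw [ellAL_single, x10]) (by rw [ellAL_single, x21])
  obtain ⟨uCLY1, uCLY2⟩ := ycase (ellCL dY) 1 (1 + δ) (2 + δ) (2 + δ)
    (by norm_num) (by linarith) (by linarith) (by linarith)
    (by rw [ellCL_single, y01]) (by rw [ellCL_single, y10])
    (by rw [ellCL_single, y12]) (by rw [ellCL_single, y21])
    (by rw [ellCL_single, y02]) (by rw [ellCL_single, y20])
    (by rw [ellCL_pairA, y02, y12, max_eq_left (by linarith)])
    (by rw [ellCL_pairB, y20, y21, max_eq_left (by linarith)])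
  obtain ⟨uALY1, uALY2⟩ := ycase (ellAL dY) 1 (1 + δ) (2 + δ) ((3 + 2 * δ) / 2)
    (by norm_num) (by linarith) (by linarith) (by linarith)
    (by rw [ellAL_single, y01]) (by rw [ellAL_single, y10])
    (by rw [ellAL_single, y12]) (by rw [ellAL_single, y21])
    (by rw [ellAL_single, y02]) (by rw [ellAL_single, y20])
    (by rw [ellAL_pairA, y02, y12]; ring)
    (by rw [ellAL_pairB, y20, y21]; ring)
  -- bounds on the metrics and ultrametrics
  have hbX : ∀ i j : Fin 3, 0 ≤ dX i j ∧ dX i j ≤ 2 := by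
    intro i j
    fin_cases i <;> fin_cases j <;>
      simp [x01, x12, x02, x10, x21, x20, x00, x11, x22] <;>
      first
        | linarith
        | (constructor <;> linarith)
  have hbY : ∀ i j : Fin 3, 0 ≤ dY i j ∧ dY i j ≤ 2 + δ := by
    intro i j
    fin_cases i <;> fin_cases j <;>
      simp [y01, y12, y02, y10, y21, y20, y00, y11, y22] <;>
      first
        | linarith
        | (constructor <;> linarith)
  have hbuCLX : ∀ i j : Fin 3, 0 ≤ stdUltra (ellCL dX) i j ∧ stdUltra (ellCL dX) i j ≤ 1 := by
    intro i j
    by_cases h : i = j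
    · rw [h, stdUltra_self]; norm_num
    · rw [uCLX i j h]; norm_num
  have hbuALX : ∀ i j : Fin 3, 0 ≤ stdUltra (ellAL dX) i j ∧ stdUltra (ellAL dX) i j ≤ 1 := by
    intro i j
    by_cases h : i = j
    · rw [h, stdUltra_self]; norm_num
    · rw [uALX i j h]; norm_num
  have hbuCLY : ∀ i j : Fin 3, 0 ≤ stdUltra (ellCL dY) i j ∧ stdUltra (ellCL dY) i j ≤ 2 + δ := by
    intro i j
    by_cases h : i = j
    · rw [h, stdUltra_self]; constructor <;> linarith
    · by_cases h2 : (i = 2) ↔ (j = 2)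
      · rw [uCLY1 i j h h2]; constructor <;> linarith
      · rw [uCLY2 i j h2]; constructor <;> linarith
  have hbuALY : ∀ i j : Fin 3, 0 ≤ stdUltra (ellAL dY) i j ∧
      stdUltra (ellAL dY) i j ≤ (3 + 2 * δ) / 2 := by
    intro i j
    by_cases h : i = j
    · rw [h, stdUltra_self]; constructor <;> linarith
    · by_cases h2 : (i = 2) ↔ (j = 2)
      · rw [uALY1 i j h h2]; constructor <;> linarith
      · rw [uALY2 i j h2]; constructor <;> linarith
  -- the diagonal correspondence
  set τ0 : Set (Fin 3 × Fin 3) := {p | p.1 = p.2} with hτ0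
  have hcorr0 : IsCorr τ0 := ⟨fun x => ⟨x, rfl⟩, fun y => ⟨y, rfl⟩⟩
  refine ⟨?_, ?_, ?_, ?_, ?_, ?_⟩
  · -- ghDist dX dY ≤ δ
    have hcd : corrDist dX dY τ0 = δ := by
      apply le_antisymm
      · apply Real.sSup_le _ hδ.le
        rintro v ⟨⟨i, j⟩, hp, ⟨k, l⟩, hq, rfl⟩
        simp only [hτ0, Set.mem_setOf_eq] at hp hq
        dsimp only at hp hq ⊢
        subst hp; subst hq
        fin_cases i <;> fin_cases k <;>
          simp [x01, x12, x02, x10, x21, x20, x00, x11, x22,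
            y01, y12, y02, y10, y21, y20, y00, y11, y22] <;>
          first
            | linarith
            | (rw [abs_le]; constructor <;> linarith)
      · apply le_csSup
        · refine ⟨2 + (2 + δ), ?_⟩
          rintro v ⟨p, hp, q, hq, rfl⟩
          have h1 := hbX p.1 q.1
          have h2 := hbY p.2 q.2
          rw [abs_le]; constructor <;> linarith
        · show ∃ p ∈ τ0, ∃ q ∈ τ0, δ = |dX p.1 q.1 - dY p.2 q.2|
          refine ⟨(0, 0), rfl, (2, 2), rfl, ?_⟩
          dsimp only
          rw [x02, y02, abs_of_nonpos (by linarith)]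
          ring
    have hmem : δ ∈ {r | ∃ τ : Set (Fin 3 × Fin 3), IsCorr τ ∧ corrDist dX dY τ = r} :=
      ⟨τ0, hcorr0, hcd⟩
    have hbb : ∀ r ∈ {r | ∃ τ : Set (Fin 3 × Fin 3), IsCorr τ ∧ corrDist dX dY τ = r},
        (0:ℝ) ≤ r := by
      rintro r ⟨τ, hc, rfl⟩
      obtain ⟨y, hy⟩ := hc.1 0
      apply le_csSup
      · refine ⟨2 + (2 + δ), ?_⟩
        rintro v ⟨p, hp, q, hq, rfl⟩
        have h1 := hbX p.1 q.1
        have h2 := hbY p.2 q.2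
        rw [abs_le]; constructor <;> linarith
      · show ∃ p ∈ τ, ∃ q ∈ τ, (0:ℝ) = |dX p.1 q.1 - dY p.2 q.2|
        refine ⟨(0, y), hy, (0, y), hy, ?_⟩
        dsimp only
        rw [x00, show dY y y = 0 from by rw [hdY]; simp]
        norm_num
    have := csInf_le ⟨0, fun r hr => hbb r hr⟩ hmem
    rw [ghDist]
    linarith
  · -- CL lower bound
    have key : ∀ r ∈ {r | ∃ τ : Set (Fin 3 × Fin 3), IsCorr τ ∧
        corrDist (stdUltra (ellCL dX)) (stdUltra (ellCL dY)) τ = r}, (1:ℝ) ≤ r := by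
      rintro r ⟨τ, hc, rfl⟩
      obtain ⟨x2, hx2⟩ := hc.2 2
      obtain ⟨x0, hx0⟩ := hc.2 0
      have hval : stdUltra (ellCL dY) 2 0 = 2 + δ := uCLY2 2 0 (by decide)
      have h1 := hbuCLX x2 x0
      have hmem2 : |stdUltra (ellCL dX) x2 x0 - stdUltra (ellCL dY) 2 0| ∈
          {v | ∃ p ∈ τ, ∃ q ∈ τ, v = |stdUltra (ellCL dX) p.1 q.1 - stdUltra (ellCL dY) p.2 q.2|} :=
        ⟨(x2, 2), hx2, (x0, 0), hx0, rfl⟩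
      refine le_trans ?_ (le_csSup ?_ hmem2)
      · rw [hval, abs_sub_comm, abs_of_nonneg (by linarith)]
        linarith
      · refine ⟨1 + (2 + δ), ?_⟩
        rintro v ⟨p, hp, q, hq, rfl⟩
        have h2 := hbuCLX p.1 q.1
        have h3 := hbuCLY p.2 q.2
        rw [abs_le]; constructor <;> linarith
    have hne : {r | ∃ τ : Set (Fin 3 × Fin 3), IsCorr τ ∧
        corrDist (stdUltra (ellCL dX)) (stdUltra (ellCL dY)) τ = r}.Nonempty :=
      ⟨_, τ0, hcorr0, rfl⟩
    have := le_csInf hne key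
    rw [ghDist]
    linarith
  · -- AL lower bound
    have key : ∀ r ∈ {r | ∃ τ : Set (Fin 3 × Fin 3), IsCorr τ ∧
        corrDist (stdUltra (ellAL dX)) (stdUltra (ellAL dY)) τ = r}, (1/2:ℝ) ≤ r := by
      rintro r ⟨τ, hc, rfl⟩
      obtain ⟨x2, hx2⟩ := hc.2 2
      obtain ⟨x0, hx0⟩ := hc.2 0
      have hval : stdUltra (ellAL dY) 2 0 = (3 + 2 * δ) / 2 := uALY2 2 0 (by decide)
      have h1 := hbuALX x2 x0
      have hmem2 : |stdUltra (ellAL dX) x2 x0 - stdUltra (ellAL dY) 2 0| ∈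
          {v | ∃ p ∈ τ, ∃ q ∈ τ, v = |stdUltra (ellAL dX) p.1 q.1 - stdUltra (ellAL dY) p.2 q.2|} :=
        ⟨(x2, 2), hx2, (x0, 0), hx0, rfl⟩
      refine le_trans ?_ (le_csSup ?_ hmem2)
      · rw [hval, abs_sub_comm, abs_of_nonneg (by linarith)]
        linarith
      · refine ⟨1 + (3 + 2 * δ) / 2, ?_⟩
        rintro v ⟨p, hp, q, hq, rfl⟩
        have h2 := hbuALX p.1 q.1
        have h3 := hbuALY p.2 q.2
        rw [abs_le]; constructor <;> linarith
    have hne : {r | ∃ τ : Set (Fin 3 × Fin 3), IsCorr τ ∧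
        corrDist (stdUltra (ellAL dX)) (stdUltra (ellAL dY)) τ = r}.Nonempty :=
      ⟨_, τ0, hcorr0, rfl⟩
    have := le_csInf hne key
    rw [ghDist]
    linarith
  · exact fun i j hij => ⟨uCLX i j hij, uALX i j hij⟩
  · exact ⟨uCLY1 0 1 (by decide) (by decide), uCLY2 0 2 (by decide), uCLY2 1 2 (by decide)⟩
  · exact ⟨uALY1 0 1 (by decide) (by decide), uALY2 0 2 (by decide), uALY2 1 2 (by decide)⟩
end

section
/- Every normal, faithful, standard linkage-based hierarchical clustering method 𝔗 = 𝔗(ℓ,∅) is semi-stable in the Gromov–Hausdorff sense: for every sequence (X_k,d_k) of finite metric spaces and every finite ultrametric space (U,u) with d_GH((X_k,d_k),(U,u)) → 0 as k → ∞, one has d_GH(𝔗_U(X_k,d_k),(U,u)) → 0. -/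
/-- A finite (nonempty) metric space, packaged with carrier `Fin n`. -/
structure FinMetricSpace where
  n : ℕ
  pos : 0 < n
  d : Fin n → Fin n → ℝ
  metric : IsMetric d

/-- `L` is a linkage function: a nonnegative, representation independent and
monotonic assignment of a real number to every pair of disjoint nonempty finite
blocks equipped with a distance function on the ambient space, such that any pair
of blocks can be made arbitrarily distant by enlarging the cross distances. -/
def IsLinkage
    (L : ∀ n : ℕ, (Fin n → Fin n → ℝ) → Finset (Fin n) → Finset (Fin n) → ℝ) : Prop :=
  -- nonnegative
  (∀ n d (B1 B2 : Finset (Fin n)), 0 ≤ L n d B1 B2) ∧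
  -- representation independent: `L` only depends on the clustering-isomorphism type
  -- of `(B₁, B₂, d|_{B₁∪B₂})`
  (∀ (n m : ℕ) (d : Fin n → Fin n → ℝ) (d' : Fin m → Fin m → ℝ)
      (B1 B2 : Finset (Fin n)) (φ : Fin n → Fin m),
      B1.Nonempty → B2.Nonempty → Disjoint B1 B2 →
      (∀ x ∈ B1 ∪ B2, ∀ y ∈ B1 ∪ B2, φ x = φ y → x = y) →
      (∀ x ∈ B1 ∪ B2, ∀ y ∈ B1 ∪ B2, d' (φ x) (φ y) = d x y) →
      L m d' (B1.image φ) (B2.image φ) = L n d B1 B2) ∧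
  -- monotonic: keeping the within-block distances and increasing the cross
  -- distances does not decrease `L`
  (∀ (n : ℕ) (d d' : Fin n → Fin n → ℝ) (B1 B2 : Finset (Fin n)),
      B1.Nonempty → B2.Nonempty → Disjoint B1 B2 →
      (∀ x y, (x ∈ B1 ∧ y ∈ B1) ∨ (x ∈ B2 ∧ y ∈ B2) → d' x y = d x y) →
      (∀ x y, (x ∈ B1 ∧ y ∈ B2) ∨ (x ∈ B2 ∧ y ∈ B1) → d x y ≤ d' x y) →
      L n d B1 B2 ≤ L n d' B1 B2) ∧
  -- any pair of clusters can be made arbitrarily distant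
  (∀ (n : ℕ) (d : Fin n → Fin n → ℝ) (B1 B2 : Finset (Fin n)),
      B1.Nonempty → B2.Nonempty → Disjoint B1 B2 → ∀ r : ℝ,
      ∃ d' : Fin n → Fin n → ℝ,
        (∀ x y, (x ∈ B1 ∧ y ∈ B1) ∨ (x ∈ B2 ∧ y ∈ B2) → d' x y = d x y) ∧
        r < L n d' B1 B2) 

section Aux

variable {X : Type*}

lemma IsMetric.nonneg' {d : X → X → ℝ} (h : IsMetric d) (x y : X) : 0 ≤ d x y := by
  have h1 : d x x = 0 := (h.2.1 x x).2 rfl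
  have h2 : d x x ≤ d x y + d y x := h.2.2 x y x
  have h3 : d y x = d x y := h.1 y x
  linarith

lemma chainMax_ultra {v : X → X → ℝ} (hv : ∀ a b c, v a c ≤ max (v a b) (v b c)) :
    ∀ (l : List X) (x y : X), v x y ≤ chainMax v x l y
  | [], x, y => le_refl _
  | z :: l, x, y =>
      le_trans (hv x z y) (max_le_max (le_refl _) (chainMax_ultra hv l z y))

lemma chainMax_le_add {v d : X → X → ℝ} {δ : ℝ} (h : ∀ a b, v a b ≤ d a b + δ) :
    ∀ (l : List X) (x y : X), chainMax v x l y ≤ chainMax d x l y + δ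
  | [], x, y => h x y
  | z :: l, x, y => by
      simp only [chainMax]
      refine max_le (le_trans (h x z) ?_) (le_trans (chainMax_le_add h l z y) ?_)
      · exact add_le_add (le_max_left _ _) (le_refl δ)
      · exact add_le_add (le_max_right _ _) (le_refl δ)

lemma chainMax_exists_pair (d : X → X → ℝ) :
    ∀ (l : List X) (x y : X), ∃ a b, chainMax d x l y = d a b
  | [], x, y => ⟨x, y, rfl⟩
  | z :: l, x, y => by
      obtain ⟨a, b, hab⟩ := chainMax_exists_pair d l z y
      rcases max_choice (d x z) (chainMax d z l y) with h | h
      · exact ⟨x, z, h⟩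
      · exact ⟨a, b, h.trans hab⟩

lemma uSL_exists [Fintype X] (d : X → X → ℝ) (x y : X) :
    ∃ l : List X, chainMax d x l y = uSL d x y := by
  have hne : {r | ∃ l : List X, chainMax d x l y = r}.Nonempty := ⟨d x y, [], rfl⟩
  have hfin : {r | ∃ l : List X, chainMax d x l y = r}.Finite := by
    refine Set.Finite.subset (Set.finite_range fun p : X × X => d p.1 p.2) ?_
    rintro r ⟨l, rfl⟩
    obtain ⟨a, b, hab⟩ := chainMax_exists_pair d l x y
    exact ⟨(a, b), hab.symm⟩
  exact hne.csInf_mem hfin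

variable [Fintype X] (ℓ : Finset X → Finset X → ℝ)

lemma stdState_le_succ (i : ℕ) {x y : X} (h : (stdState ℓ i).1 x y) :
    (stdState ℓ (i + 1)).1 x y := by
  show (stdStep ℓ (stdState ℓ i)).1 x y
  simp only [stdStep]
  split_ifs with hf
  · exact h
  · exact Relation.EqvGen.rel _ _ (Or.inl h)

lemma stdState_mono {i j : ℕ} (hij : i ≤ j) {x y : X} (h : (stdState ℓ i).1 x y) :
    (stdState ℓ j).1 x y := by
  induction j with
  | zero => exact Nat.le_zero.mp hij ▸ h
  | succ j ih =>
      rcases Nat.lt_or_ge i (j+1) with hlt | hge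
      · exact stdState_le_succ ℓ j (ih (Nat.lt_succ_iff.mp hlt))
      · have : i = j + 1 := le_antisymm hij hge
        exact this ▸ h

lemma nextR_mem {e : X → X → Prop} (hne : ∃ x y, ¬ e x y) :
    ∃ x y, ¬ e x y ∧ ℓ (cls e x) (cls e y) = nextR ℓ e := by
  have hSne : {r | ∃ x y, ¬ e x y ∧ ℓ (cls e x) (cls e y) = r}.Nonempty := by
    obtain ⟨x, y, hxy⟩ := hne
    exact ⟨_, x, y, hxy, rfl⟩
  have hfin : {r | ∃ x y, ¬ e x y ∧ ℓ (cls e x) (cls e y) = r}.Finite := by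
    refine Set.Finite.subset (Set.finite_range fun p : X × X => ℓ (cls e p.1) (cls e p.2)) ?_
    rintro r ⟨x, y, _, rfl⟩
    exact ⟨(x, y), rfl⟩
  exact hSne.csInf_mem hfin

lemma nextR_le {e : X → X → Prop} {x y : X} (hnn : ∀ A B, 0 ≤ ℓ A B) (h : ¬ e x y) :
    nextR ℓ e ≤ ℓ (cls e x) (cls e y) := by
  refine csInf_le ⟨0, ?_⟩ ⟨x, y, h, rfl⟩
  rintro r ⟨a, b, _, rfl⟩
  exact hnn _ _

lemma exists_full : ∃ N, ∀ x y : X, (stdState ℓ N).1 x y := by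
  classical
  by_contra hc
  push_neg at hc
  set c : ℕ → ℕ := fun i =>
    (Finset.univ.filter (fun p : X × X => (stdState ℓ i).1 p.1 p.2)).card with hc_def
  have hmono : ∀ i, c i < c (i + 1) := by
    intro i
    obtain ⟨x, y, hxy⟩ := hc i
    have hnotfull : ¬ ∀ a b : X, (stdState ℓ i).1 a b := fun h => hxy (h x y)
    obtain ⟨a, b, hab, habR⟩ := nextR_mem ℓ (e := (stdState ℓ i).1) ⟨x, y, hxy⟩
    have hstep : (stdState ℓ (i + 1)).1
        = mergeRel ℓ (stdState ℓ i).1 (nextR ℓ (stdState ℓ i).1) := by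
      show (stdStep ℓ (stdState ℓ i)).1 = _
      simp only [stdStep]
      rw [if_neg hnotfull]
    apply Finset.card_lt_card
    constructor
    · intro p hp
      simp only [Finset.mem_filter, Finset.mem_univ, true_and] at hp ⊢
      exact stdState_le_succ ℓ i hp
    · intro hsub
      have hmem : (a, b) ∈ (Finset.univ.filter
          (fun p : X × X => (stdState ℓ (i+1)).1 p.1 p.2)) := by
        simp only [Finset.mem_filter, Finset.mem_univ, true_and, hstep]
        exact Relation.EqvGen.rel _ _ (Or.inr (le_of_eq habR))
      have := hsub hmem
      simp only [Finset.mem_filter, Finset.mem_univ, true_and] at this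
      exact hab this
  have hle : ∀ i, i ≤ c i := by
    intro i
    induction i with
    | zero => exact Nat.zero_le _
    | succ i ih => exact Nat.lt_of_le_of_lt ih (hmono i)
  have hub : c (Fintype.card (X × X) + 1) ≤ Fintype.card (X × X) := by
    calc c (Fintype.card (X × X) + 1) ≤ Finset.univ.card := Finset.card_filter_le _ _
    _ = Fintype.card (X × X) := Finset.card_univ
  have := hle (Fintype.card (X × X) + 1)
  omega

lemma stdUltra_le {x y : X} {t : ℝ} (ht : 0 ≤ t) (h : dendroRel ℓ t x y) :
    stdUltra ℓ x y ≤ t :=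
  csInf_le ⟨0, fun r hr => hr.1⟩ ⟨ht, h⟩

end Aux
section Key

lemma exists_gap {m : ℕ} (u : Fin m → Fin m → ℝ) :
    ∃ γ > (0:ℝ), ∀ a b : ℝ, (∃ p q, u p q = a) → (∃ p q, u p q = b) → b < a → b + γ ≤ a := by
  set G : Set ℝ :=
    {x | ∃ a b : ℝ, (∃ p q, u p q = a) ∧ (∃ p q, u p q = b) ∧ b < a ∧ x = a - b} with hG_def
  have hGfin : G.Finite := by
    refine Set.Finite.subset (Set.Finite.image (fun p : (Fin m × Fin m) × (Fin m × Fin m) =>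
      u p.1.1 p.1.2 - u p.2.1 p.2.2) (Set.finite_univ)) ?_
    rintro r ⟨a, b, ⟨p, q, rfl⟩, ⟨p', q', rfl⟩, _, rfl⟩
    exact ⟨((p, q), (p', q')), trivial, rfl⟩
  by_cases hG : G.Nonempty
  · refine ⟨sInf G, ?_, ?_⟩
    · obtain ⟨a, b, _, _, hlt, heq⟩ := hG.csInf_mem hGfin
      rw [heq]; linarith
    · intro a b ha hb hlt
      have hmem : a - b ∈ G := ⟨a, b, ha, hb, hlt, rfl⟩
      have := csInf_le hGfin.bddBelow hmem
      linarith
  · refine ⟨1, one_pos, fun a b ha hb hlt => ?_⟩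
    exact absurd (⟨a, b, ha, hb, hlt, rfl⟩ : (a - b) ∈ G) (fun hmem => hG ⟨_, hmem⟩)

lemma corrDist_pt {X Y : Type*} [Fintype X] [Fintype Y] {dX : X → X → ℝ} {dY : Y → Y → ℝ}
    {τ : Set (X × Y)} {x y : X} {p q : Y} (h1 : (x, p) ∈ τ) (h2 : (y, q) ∈ τ) :
    |dX x y - dY p q| ≤ corrDist dX dY τ := by
  refine le_csSup ?_ ⟨(x, p), h1, (y, q), h2, rfl⟩
  refine Set.Finite.bddAbove (Set.Finite.subset (Set.finite_range
    (fun pq : (X × Y) × (X × Y) => |dX pq.1.1 pq.2.1 - dY pq.1.2 pq.2.2|)) ?_)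
  rintro r ⟨a, _, b, _, rfl⟩
  exact ⟨(a, b), rfl⟩

lemma corrDist_nonneg {X Y : Type*} {dX : X → X → ℝ} {dY : Y → Y → ℝ} {τ : Set (X × Y)} :
    0 ≤ corrDist dX dY τ := by
  refine Real.sSup_nonneg ?_
  rintro r ⟨a, _, b, _, rfl⟩
  exact abs_nonneg _

lemma keyUB {n m : ℕ} (d : Fin n → Fin n → ℝ) (u : Fin m → Fin m → ℝ)
    (hu : IsUltrametricD u)
    (ℓ : Finset (Fin n) → Finset (Fin n) → ℝ)
    (hnn : ∀ A B, 0 ≤ ℓ A B)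
    (hCL : ∀ r : ℝ, 0 ≤ r → ∀ x y : Fin n, ¬ dendroRel ℓ r x y →
      ℓ (cls (dendroRel ℓ r) x) (cls (dendroRel ℓ r) y) ≤
        ellCL d (cls (dendroRel ℓ r) x) (cls (dendroRel ℓ r) y))
    (hSL : ∀ x y, uSL d x y ≤ stdUltra ℓ x y)
    (δ γ : ℝ) (hδ : 0 < δ) (hγ : 3 * δ < γ)
    (hgap : ∀ a b : ℝ, (∃ p q, u p q = a) → (∃ p q, u p q = b) → b < a → b + γ ≤ a)
    (σ : Fin n → Fin m)
    (hσ : ∀ x y, |d x y - u (σ x) (σ y)| ≤ δ) :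
    ∀ x y, dendroRel ℓ (u (σ x) (σ y) + 2 * δ) x y := by
  classical
  intro x y
  by_contra hxy
  set v : Fin n → Fin n → ℝ := fun a b => u (σ a) (σ b) with hv_def
  set t : ℝ := v x y + 2 * δ with ht_def
  have hunn : ∀ a b, 0 ≤ u a b := hu.1.nonneg'
  have ht0 : 0 ≤ t := by
    have := hunn (σ x) (σ y); simp only [ht_def, hv_def]; linarith
  obtain ⟨Nf, hNf⟩ := exists_full ℓ (X := Fin n)
  have hSb : ∀ i : ℕ, (stdState ℓ i).2 ≤ t → i < Nf := by
    intro i hi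
    by_contra hcon
    push_neg at hcon
    exact hxy ⟨i, hi, stdState_mono ℓ hcon (hNf x y)⟩
  set T : Finset ℕ := (Finset.range Nf).filter (fun i => (stdState ℓ i).2 ≤ t) with hT_def
  have h0T : (0 : ℕ) ∈ T := by
    have h0 : (stdState ℓ 0).2 ≤ t := by simp [stdState]; exact ht0
    simp only [hT_def, Finset.mem_filter, Finset.mem_range]
    exact ⟨hSb 0 h0, h0⟩
  set i₀ : ℕ := T.max' ⟨0, h0T⟩ with hi₀_def
  have hi₀T : i₀ ∈ T := T.max'_mem _
  have hi₀R : (stdState ℓ i₀).2 ≤ t := by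
    have := hi₀T; simp only [hT_def, Finset.mem_filter] at this; exact this.2
  have hle : ∀ i : ℕ, (stdState ℓ i).2 ≤ t → i ≤ i₀ := by
    intro i hi
    refine T.le_max' i ?_
    simp only [hT_def, Finset.mem_filter, Finset.mem_range]
    exact ⟨hSb i hi, hi⟩
  set e : Fin n → Fin n → Prop := (stdState ℓ i₀).1 with he_def
  have heD : ∀ a b, e a b ↔ dendroRel ℓ t a b := by
    intro a b
    constructor
    · intro hab; exact ⟨i₀, hi₀R, hab⟩
    · rintro ⟨i, hi, hab⟩; exact stdState_mono ℓ (hle i hi) hab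
  have hcls : ∀ a, cls e a = cls (dendroRel ℓ t) a := by
    intro a
    ext b
    simp only [cls, Finset.mem_filter, Finset.mem_univ, true_and]
    exact heD a b
  have hnotfull : ¬ ∀ a b, e a b := fun hf => hxy ((heD x y).1 (hf x y))
  have hstep : (stdState ℓ (i₀ + 1)).2 = nextR ℓ e := by
    show (stdStep ℓ (stdState ℓ i₀)).2 = _
    simp only [stdStep]
    rw [if_neg hnotfull]
  have hR : t < nextR ℓ e := by
    by_contra hcon
    push_neg at hcon
    have : i₀ + 1 ≤ i₀ := hle (i₀ + 1) (hstep ▸ hcon)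
    omega
  -- blocks have small v-radius
  have hblock : ∀ z a : Fin n, a ∈ cls (dendroRel ℓ t) z → v z a ≤ t + δ := by
    intro z a ha
    have hda : dendroRel ℓ t z a := by
      simpa only [cls, Finset.mem_filter, Finset.mem_univ, true_and] using ha
    have h1 : stdUltra ℓ z a ≤ t := stdUltra_le ℓ ht0 hda
    have h2 : uSL d z a ≤ t := le_trans (hSL z a) h1
    obtain ⟨l, hl⟩ := uSL_exists d z a
    have h3 : v z a ≤ chainMax v z l a :=
      chainMax_ultra (fun a b c => hu.2 (σ a) (σ b) (σ c)) l z a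
    have h4 : chainMax v z l a ≤ chainMax d z l a + δ := by
      refine chainMax_le_add (fun a b => ?_) l z a
      have := abs_le.mp (hσ a b)
      simp only [hv_def]; linarith
    rw [hl] at h4
    linarith
  have hspec : ∀ z a : Fin n, a ∈ cls (dendroRel ℓ t) z → v z a ≤ v x y := by
    intro z a ha
    by_contra hcon
    push_neg at hcon
    have hg := hgap (v z a) (v x y) ⟨_, _, rfl⟩ ⟨_, _, rfl⟩ hcon
    have := hblock z a ha
    simp only [ht_def] at this
    linarith
  have hcross : ∀ a ∈ cls (dendroRel ℓ t) x, ∀ b ∈ cls (dendroRel ℓ t) y,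
      d a b ≤ v x y + δ := by
    intro a ha b hb
    have h1 : v x a ≤ v x y := hspec x a ha
    have h2 : v y b ≤ v x y := hspec y b hb
    have h3 : u (σ a) (σ b) ≤ max (u (σ a) (σ x)) (u (σ x) (σ b)) := hu.2 _ _ _
    have h4 : u (σ x) (σ b) ≤ max (u (σ x) (σ y)) (u (σ y) (σ b)) := hu.2 _ _ _
    have hsym1 : u (σ a) (σ x) = u (σ x) (σ a) := hu.1.1 _ _
    have h5 : v a b ≤ v x y := by
      simp only [hv_def] at *
      rw [hsym1] at h3
      refine le_trans h3 (max_le h1 (le_trans h4 (max_le le_rfl h2)))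
    have := abs_le.mp (hσ a b)
    simp only [hv_def] at *
    linarith
  have hCLb : ellCL d (cls (dendroRel ℓ t) x) (cls (dendroRel ℓ t) y) ≤ v x y + δ := by
    refine Real.sSup_le ?_ ?_
    · rintro r ⟨a, ha, b, hb, rfl⟩
      exact hcross a ha b hb
    · have := hunn (σ x) (σ y); simp only [hv_def]; linarith
  have hnext_le : nextR ℓ e ≤ ℓ (cls e x) (cls e y) :=
    nextR_le ℓ hnn (fun hexy => hxy ((heD x y).1 hexy))
  rw [hcls x, hcls y] at hnext_le
  have hCL' := hCL t ht0 x y hxy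
  simp only [ht_def] at hR
  linarith

lemma keyLB {n m : ℕ} (d : Fin n → Fin n → ℝ) (u : Fin m → Fin m → ℝ)
    (hu : IsUltrametricD u)
    (ℓ : Finset (Fin n) → Finset (Fin n) → ℝ)
    (hSL : ∀ x y, uSL d x y ≤ stdUltra ℓ x y)
    (δ : ℝ) (σ : Fin n → Fin m)
    (hσ : ∀ x y, |d x y - u (σ x) (σ y)| ≤ δ) :
    ∀ x y, u (σ x) (σ y) - δ ≤ stdUltra ℓ x y := by
  intro x y
  refine le_trans ?_ (hSL x y)
  refine le_csInf ⟨d x y, [], rfl⟩ ?_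
  rintro r ⟨l, rfl⟩
  set v : Fin n → Fin n → ℝ := fun a b => u (σ a) (σ b) with hv_def
  have h1 : v x y ≤ chainMax v x l y :=
    chainMax_ultra (fun a b c => hu.2 (σ a) (σ b) (σ c)) l x y
  have h2 : chainMax v x l y ≤ chainMax d x l y + δ := by
    refine chainMax_le_add (fun a b => ?_) l x y
    have := abs_le.mp (hσ a b)
    simp only [hv_def]; linarith
  simp only [hv_def] at h1
  linarith

end Key
/-- every normal, faithful, standard linkage-based hierarchical
clustering method `𝔗 = 𝔗(ℓ,∅)` is semi-stable in the Gromov–Hausdorff sense: if a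
sequence of finite metric spaces converges in `d_GH` to a finite ultrametric space
`(U,u)`, then the output ultrametric spaces `𝔗_U(X_k,d_k)` converge in `d_GH`
to `(U,u)`.  Normality says that the linkage value of two distinct blocks of the
dendrogram is at most the maximal cross distance (`ℓ ≤ ℓ^CL`) and that the output
ultrametric dominates the single-linkage ultrametric; faithfulness says that the
method fixes every finite ultrametric space. -/
theorem stmt18
    (L : ∀ n : ℕ, (Fin n → Fin n → ℝ) → Finset (Fin n) → Finset (Fin n) → ℝ)
    (hL : IsLinkage L)
    (hnormalCL : ∀ M : FinMetricSpace, ∀ r : ℝ, 0 ≤ r → ∀ x y : Fin M.n,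
      ¬ dendroRel (L M.n M.d) r x y →
      L M.n M.d (cls (dendroRel (L M.n M.d) r) x) (cls (dendroRel (L M.n M.d) r) y) ≤
        ellCL M.d (cls (dendroRel (L M.n M.d) r) x) (cls (dendroRel (L M.n M.d) r) y))
    (hnormalSL : ∀ M : FinMetricSpace, ∀ x y : Fin M.n,
      uSL M.d x y ≤ stdUltra (L M.n M.d) x y)
    (hfaithful : ∀ M : FinMetricSpace, IsUltrametricD M.d →
      ∀ x y, stdUltra (L M.n M.d) x y = M.d x y)
    (Xk : ℕ → FinMetricSpace) (U : FinMetricSpace) (hU : IsUltrametricD U.d)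
    (h : Filter.Tendsto (fun k => ghDist (Xk k).d U.d) Filter.atTop (nhds 0)) :
    Filter.Tendsto (fun k => ghDist (stdUltra (L (Xk k).n (Xk k).d)) U.d)
      Filter.atTop (nhds 0) := by
  obtain ⟨hnn, -, -, -⟩ := hL
  obtain ⟨γ, hγ0, hgap⟩ := exists_gap U.d
  rw [Metric.tendsto_atTop] at h ⊢
  intro ε hε
  set δ : ℝ := min (ε / 8) (γ / 4) with hδ_def
  have hδ0 : 0 < δ := lt_min (by linarith) (by linarith)
  have h3δ : 3 * δ < γ := by
    have h1 : δ ≤ γ / 4 := min_le_right _ _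
    linarith
  obtain ⟨N, hN⟩ := h (δ / 2) (by linarith)
  refine ⟨N, fun k hk => ?_⟩
  have hgh := hN k hk
  rw [Real.dist_eq, sub_zero] at hgh ⊢
  have h1 : ghDist (Xk k).d U.d < δ / 2 := lt_of_abs_lt hgh
  set n := (Xk k).n
  set d := (Xk k).d
  set u := U.d
  set ℓ : Finset (Fin n) → Finset (Fin n) → ℝ := L n d with hℓ_def
  -- extract a good correspondence
  have hsinf : sInf {r | ∃ τ : Set (Fin n × Fin U.n), IsCorr τ ∧ corrDist d u τ = r} < δ := by
    have : ghDist d u = (1 / 2) * sInf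
        {r | ∃ τ : Set (Fin n × Fin U.n), IsCorr τ ∧ corrDist d u τ = r} := rfl
    rw [this] at h1
    linarith
  have hTne : {r | ∃ τ : Set (Fin n × Fin U.n), IsCorr τ ∧ corrDist d u τ = r}.Nonempty := by
    refine ⟨corrDist d u Set.univ, Set.univ, ⟨?_, ?_⟩, rfl⟩
    · exact fun x => ⟨⟨0, U.pos⟩, trivial⟩
    · exact fun y => ⟨⟨0, (Xk k).pos⟩, trivial⟩
  obtain ⟨r, ⟨τ, hcorr, rfl⟩, hrδ⟩ := exists_lt_of_csInf_lt hTne hsinf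
  have hpt : ∀ (x y : Fin n) (p q : Fin U.n), (x, p) ∈ τ → (y, q) ∈ τ →
      |d x y - u p q| ≤ δ := fun x y p q h1 h2 =>
    le_of_lt (lt_of_le_of_lt (corrDist_pt h1 h2) hrδ)
  choose σ hσ using hcorr.1
  have hσd : ∀ x y, |d x y - u (σ x) (σ y)| ≤ δ := fun x y => hpt x y _ _ (hσ x) (hσ y)
  -- the two bounds on the output ultrametric
  have hub' := keyUB d u hU ℓ (hnn n d) (hnormalCL (Xk k)) (hnormalSL (Xk k))
    δ γ hδ0 h3δ hgap σ hσd
  have hub : ∀ x y, stdUltra ℓ x y ≤ u (σ x) (σ y) + 2 * δ := by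
    intro x y
    refine stdUltra_le ℓ ?_ (hub' x y)
    have := hU.1.nonneg' (σ x) (σ y)
    linarith
  have hlb := keyLB d u hU ℓ (hnormalSL (Xk k)) δ σ hσd
  -- distortion of τ between the output and (U, u)
  have hcd : corrDist (stdUltra ℓ) u τ ≤ 4 * δ := by
    refine Real.sSup_le ?_ (by linarith)
    rintro r ⟨⟨x, p⟩, hp, ⟨y, q⟩, hq, rfl⟩
    have hxp : u (σ x) p ≤ δ := by
      have := hpt x x (σ x) p (hσ x) hp
      have hdxx : d x x = 0 := ((Xk k).metric.2.1 x x).2 rfl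
      rw [hdxx] at this
      have habs : |u (σ x) p| ≤ δ := by
        have : |-(u (σ x) p)| ≤ δ := by simpa using this
        simpa [abs_neg] using this
      exact le_trans (le_abs_self _) habs
    have hyq : u (σ y) q ≤ δ := by
      have := hpt y y (σ y) q (hσ y) hq
      have hdyy : d y y = 0 := ((Xk k).metric.2.1 y y).2 rfl
      rw [hdyy] at this
      have habs : |u (σ y) q| ≤ δ := by
        have : |-(u (σ y) q)| ≤ δ := by simpa using this
        simpa [abs_neg] using this
      exact le_trans (le_abs_self _) habs
    have t1 : u (σ x) (σ y) ≤ u (σ x) p + (u p q + u q (σ y)) := by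
      refine le_trans (hU.1.2.2 (σ x) p (σ y)) ?_
      have := hU.1.2.2 p q (σ y)
      linarith
    have t2 : u p q ≤ u p (σ x) + (u (σ x) (σ y) + u (σ y) q) := by
      refine le_trans (hU.1.2.2 p (σ x) q) ?_
      have := hU.1.2.2 (σ x) (σ y) q
      linarith
    have hs1 : u p (σ x) = u (σ x) p := hU.1.1 _ _
    have hs2 : u q (σ y) = u (σ y) q := hU.1.1 _ _
    have hu1 := hub x y
    have hu2 := hlb x y
    show |stdUltra ℓ x y - u p q| ≤ 4 * δ
    rw [abs_le]
    exact ⟨by linarith, by linarith⟩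
  -- conclude
  have hfin : ghDist (stdUltra ℓ) u ≤ 2 * δ := by
    have hin : sInf {r | ∃ τ' : Set (Fin n × Fin U.n), IsCorr τ' ∧
        corrDist (stdUltra ℓ) u τ' = r} ≤ corrDist (stdUltra ℓ) u τ := by
      refine csInf_le ⟨0, ?_⟩ ⟨τ, hcorr, rfl⟩
      rintro r ⟨τ', -, rfl⟩
      exact corrDist_nonneg
    have : ghDist (stdUltra ℓ) u = (1 / 2) * sInf {r | ∃ τ' : Set (Fin n × Fin U.n),
        IsCorr τ' ∧ corrDist (stdUltra ℓ) u τ' = r} := rfl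
    rw [this]
    linarith
  have hfnn : 0 ≤ ghDist (stdUltra ℓ) u := by
    have : (0:ℝ) ≤ sInf {r | ∃ τ' : Set (Fin n × Fin U.n), IsCorr τ' ∧
        corrDist (stdUltra ℓ) u τ' = r} := by
      refine Real.sInf_nonneg ?_
      rintro r ⟨τ', -, rfl⟩
      exact corrDist_nonneg
    show (0:ℝ) ≤ (1 / 2) * sInf _
    linarith
  have hδε : δ ≤ ε / 8 := min_le_left _ _
  rw [abs_of_nonneg hfnn]
  calc ghDist (stdUltra ℓ) u ≤ 2 * δ := hfin
  _ < ε := by linarith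
end
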